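/- arXiv:1610.03705 — 4 statements merged into one kernel-verified Lean document; each statement's English description precedes it below -/
import Mathlib

section
/- For every integer m ≥ 1, as t → ∞ the average path length d_t of the Koch network K_{m,t} satisfies d_t / t → 4m/(3m+1). -/
/-- The triangles of the Koch network `K_{m,t}`: at step `t+1`, each old triangle survives and
each (triangle, corner, group) creates a new triangle. -/
def KochTri (m : ℕ) : ℕ → Type
  | 0 => Unit
  | t+1 => KochTri m t ⊕ (KochTri m t × Fin 3 × Fin m)

/-- The vertices of the Koch network `K_{m,t}`: at step `t+1`, each (triangle, corner, group)
creates two new vertices. -/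
def KochVertex (m : ℕ) : ℕ → Type
  | 0 => Fin 3
  | t+1 => KochVertex m t ⊕ (KochTri m t × Fin 3 × Fin m × Fin 2)

/-- The three corner vertices of each triangle. -/
def KochCorner (m : ℕ) : ∀ t, KochTri m t → Fin 3 → KochVertex m t
  | 0, _, i => i
  | t+1, Sum.inl τ, i => Sum.inl (KochCorner m t τ i)
  | t+1, Sum.inr (τ, c, g), i =>
      ![Sum.inl (KochCorner m t τ c), Sum.inr (τ, c, g, 0), Sum.inr (τ, c, g, 1)] i

instance KochTri.instDecidableEq (m : ℕ) : ∀ t, DecidableEq (KochTri m t)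
  | 0 => inferInstanceAs (DecidableEq Unit)
  | t+1 =>
    letI := KochTri.instDecidableEq m t
    inferInstanceAs (DecidableEq (KochTri m t ⊕ (KochTri m t × Fin 3 × Fin m)))

instance KochVertex.instDecidableEq (m : ℕ) : ∀ t, DecidableEq (KochVertex m t)
  | 0 => inferInstanceAs (DecidableEq (Fin 3))
  | t+1 =>
    letI := KochVertex.instDecidableEq m t
    letI := KochTri.instDecidableEq m t
    inferInstanceAs (DecidableEq (KochVertex m t ⊕ (KochTri m t × Fin 3 × Fin m × Fin 2)))

instance KochTri.instFintype (m : ℕ) : ∀ t, Fintype (KochTri m t)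
  | 0 => inferInstanceAs (Fintype Unit)
  | t+1 =>
    letI := KochTri.instFintype m t
    inferInstanceAs (Fintype (KochTri m t ⊕ (KochTri m t × Fin 3 × Fin m)))

instance KochVertex.instFintype (m : ℕ) : ∀ t, Fintype (KochVertex m t)
  | 0 => inferInstanceAs (Fintype (Fin 3))
  | t+1 =>
    letI := KochVertex.instFintype m t
    letI := KochTri.instFintype m t
    inferInstanceAs (Fintype (KochVertex m t ⊕ (KochTri m t × Fin 3 × Fin m × Fin 2)))

/-- The Koch network `K_{m,t}`: two distinct vertices are adjacent iff they are corners of a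
common triangle. -/
def KochGraph (m t : ℕ) : SimpleGraph (KochVertex m t) where
  Adj u v := u ≠ v ∧ ∃ (τ : KochTri m t) (i j : Fin 3),
      KochCorner m t τ i = u ∧ KochCorner m t τ j = v
  symm := ⟨by rintro u v ⟨hne, τ, i, j, hi, hj⟩; exact ⟨hne.symm, τ, j, i, hj, hi⟩⟩
  loopless := ⟨by rintro u ⟨hne, -⟩; exact hne rfl⟩

instance (m t : ℕ) : DecidableRel (KochGraph m t).Adj := fun u v =>
  inferInstanceAs (Decidable (u ≠ v ∧ ∃ (τ : KochTri m t) (i j : Fin 3),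
      KochCorner m t τ i = u ∧ KochCorner m t τ j = v))

/-- The step at which a vertex of `K_{m,t}` was added (initial vertices are added at step 0). -/
def KochBirth (m : ℕ) : ∀ t, KochVertex m t → ℕ
  | 0, _ => 0
  | t+1, Sum.inl v => KochBirth m t v
  | t+1, Sum.inr _ => t+1

/-- The canonical inclusion of `K_{m,t}` into `K_{m,t+1}`. -/
def KochInl (m t : ℕ) (v : KochVertex m t) : KochVertex m (t+1) := Sum.inl v

/-- The other member of the group of two with which a (non-initial) vertex was added. -/
def KochSibling (m : ℕ) : ∀ t, KochVertex m t → KochVertex m t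
  | 0, v => v
  | t+1, Sum.inl v => Sum.inl (KochSibling m t v)
  | t+1, Sum.inr (τ, c, g, p) => Sum.inr (τ, c, g, if p = 0 then 1 else 0)

/-- The father vertex of a (non-initial) vertex: the existing vertex to which its group of two
was attached. -/
def KochFather (m : ℕ) : ∀ t, KochVertex m t → KochVertex m t
  | 0, v => v
  | t+1, Sum.inl v => Sum.inl (KochFather m t v)
  | t+1, Sum.inr (τ, c, _, _) => Sum.inl (KochCorner m t τ c)

section PartA

variable {m : ℕ}

/-- Retraction of `K_{m,t+1}` onto `K_{m,t}`. -/
def KochPi (m t : ℕ) : KochVertex m (t+1) → KochVertex m t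
  | Sum.inl v => v
  | Sum.inr (τ, c, _, _) => KochCorner m t τ c

@[simp] lemma kochCorner_succ_inl (t : ℕ) (τ : KochTri m t) (i : Fin 3) :
    KochCorner m (t+1) (Sum.inl τ) i = Sum.inl (KochCorner m t τ i) := rfl

lemma kochCorner_succ_inr (t : ℕ) (τ : KochTri m t) (c : Fin 3) (g : Fin m) (i : Fin 3) :
    KochCorner m (t+1) (Sum.inr (τ, c, g)) i =
      ![Sum.inl (KochCorner m t τ c), Sum.inr (τ, c, g, 0), Sum.inr (τ, c, g, 1)] i := rfl

lemma adj_inl_inl {t : ℕ} {u v : KochVertex m t} :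
    (KochGraph m (t+1)).Adj (Sum.inl u) (Sum.inl v) ↔ (KochGraph m t).Adj u v := by
  constructor
  · rintro ⟨hne, τ, i, j, hi, hj⟩
    rcases τ with τ | ⟨τ, c, g⟩
    · exact ⟨fun h => hne (by rw [h]), τ, i, j, Sum.inl.inj hi, Sum.inl.inj hj⟩
    · rw [kochCorner_succ_inr] at hi hj
      fin_cases i <;> fin_cases j <;> simp_all
  · rintro ⟨hne, τ, i, j, hi, hj⟩
    exact ⟨fun h => hne (Sum.inl.inj h), Sum.inl τ, i, j, congrArg Sum.inl hi, congrArg Sum.inl hj⟩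

end PartA
section PartA2
variable {m : ℕ}

@[simp] lemma kv_inl_inj {t : ℕ} {u v : KochVertex m t} :
    @Eq (KochVertex m (t+1)) (Sum.inl u) (Sum.inl v) ↔ u = v := Sum.inl_injective.eq_iff

@[simp] lemma kv_inr_inj {t : ℕ} {a b : KochTri m t × Fin 3 × Fin m × Fin 2} :
    @Eq (KochVertex m (t+1)) (Sum.inr a) (Sum.inr b) ↔ a = b := Sum.inr_injective.eq_iff

@[simp] lemma kv_inl_ne_inr {t : ℕ} {u : KochVertex m t} {a} :
    @Eq (KochVertex m (t+1)) (Sum.inl u) (Sum.inr a) ↔ False :=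
  ⟨(fun h => by cases h), False.elim⟩

@[simp] lemma kv_inr_ne_inl {t : ℕ} {u : KochVertex m t} {a} :
    @Eq (KochVertex m (t+1)) (Sum.inr a) (Sum.inl u) ↔ False :=
  ⟨(fun h => by cases h), False.elim⟩

lemma adj_inl_inr {t : ℕ} {u : KochVertex m t} {τ : KochTri m t} {c : Fin 3} {g : Fin m}
    {p : Fin 2} :
    (KochGraph m (t+1)).Adj (Sum.inl u) (Sum.inr (τ, c, g, p)) ↔ u = KochCorner m t τ c := by
  constructor
  · rintro ⟨hne, T, i, j, hi, hj⟩
    rcases T with T | ⟨τ', c', g'⟩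
    · exact absurd hj (by simp)
    · rw [kochCorner_succ_inr] at hi hj
      fin_cases i <;> fin_cases j <;> simp_all
  · rintro rfl
    refine ⟨(fun h => by cases h), Sum.inr (τ, c, g), 0, if p = 0 then 1 else 2, rfl, ?_⟩
    fin_cases p <;> simp [kochCorner_succ_inr]

lemma adj_inr_inr {t : ℕ} {τ τ' : KochTri m t} {c c' : Fin 3} {g g' : Fin m} {p p' : Fin 2} :
    (KochGraph m (t+1)).Adj (Sum.inr (τ, c, g, p)) (Sum.inr (τ', c', g', p')) ↔
      (τ = τ' ∧ c = c' ∧ g = g' ∧ p ≠ p') := by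
  constructor
  · rintro ⟨hne, T, i, j, hi, hj⟩
    have hne' : ¬ (τ = τ' ∧ c = c' ∧ g = g' ∧ p = p') := by
      rintro ⟨rfl, rfl, rfl, rfl⟩; exact hne rfl
    rcases T with T | ⟨τ'', c'', g''⟩
    · exact absurd hj (by simp)
    · rw [kochCorner_succ_inr] at hi hj
      fin_cases i <;> fin_cases j <;> simp_all <;> (obtain ⟨rfl, rfl, rfl, rfl⟩ := hi; simp_all)
  · rintro ⟨rfl, rfl, rfl, hp⟩
    refine ⟨(fun h => by cases h; exact hp rfl), Sum.inr (τ, c, g), if p = 0 then 1 else 2,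
      if p' = 0 then 1 else 2, ?_, ?_⟩ <;> fin_cases p <;> fin_cases p' <;>
      simp_all [kochCorner_succ_inr]

end PartA2
section PartA3
variable {m : ℕ}

lemma kochPi_adj {t : ℕ} {x y : KochVertex m (t+1)} (h : (KochGraph m (t+1)).Adj x y) :
    KochPi m t x = KochPi m t y ∨ (KochGraph m t).Adj (KochPi m t x) (KochPi m t y) := by
  rcases x with u | ⟨τ, c, g, p⟩ <;> rcases y with v | ⟨τ', c', g', p'⟩
  · exact Or.inr (adj_inl_inl.mp h)
  · exact Or.inl (adj_inl_inr.mp h)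
  · exact Or.inl (adj_inl_inr.mp h.symm).symm
  · obtain ⟨rfl, rfl, rfl, -⟩ := adj_inr_inr.mp h
    exact Or.inl rfl

/-- Projection of walks. -/
lemma exists_walk_pi {t : ℕ} {x y : KochVertex m (t+1)} (W : (KochGraph m (t+1)).Walk x y) :
    ∃ W' : (KochGraph m t).Walk (KochPi m t x) (KochPi m t y), W'.length ≤ W.length := by
  induction W with
  | nil => exact ⟨SimpleGraph.Walk.nil, le_rfl⟩
  | cons h W ih =>
    obtain ⟨W', hW'⟩ := ih
    rcases kochPi_adj h with heq | hadj
    · exact ⟨W'.copy heq.symm rfl, by simpa using hW'.trans (Nat.le_succ _)⟩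
    · exact ⟨W'.cons hadj, by simpa using Nat.succ_le_succ hW'⟩

def KochInlHom (m t : ℕ) : KochGraph m t →g KochGraph m (t+1) :=
  ⟨Sum.inl, adj_inl_inl.mpr⟩

def KochV0 (m : ℕ) : ∀ t, KochVertex m t
  | 0 => (0 : Fin 3)
  | t+1 => Sum.inl (KochV0 m t)

lemma koch_connected (t : ℕ) : (KochGraph m t).Connected := by
  rw [SimpleGraph.connected_iff]
  refine ⟨?_, ⟨KochV0 m t⟩⟩
  induction t with
  | zero =>
    intro u v
    by_cases h : u = v
    · exact h ▸ SimpleGraph.Reachable.refl _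
    · exact SimpleGraph.Adj.reachable ⟨h, (), u, v, rfl, rfl⟩
  | succ t ih =>
    have hr : ∀ x : KochVertex m (t+1), ∃ u : KochVertex m t,
        (KochGraph m (t+1)).Reachable x (Sum.inl u) := by
      rintro (u | ⟨τ, c, g, p⟩)
      · exact ⟨u, SimpleGraph.Reachable.refl _⟩
      · exact ⟨KochCorner m t τ c, (SimpleGraph.Adj.reachable (adj_inl_inr.mpr rfl)).symm⟩
    intro x y
    obtain ⟨u, hu⟩ := hr x
    obtain ⟨v, hv⟩ := hr y
    exact hu.trans (((ih u v).map (KochInlHom m t)).trans hv.symm)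

lemma dist_inl {t : ℕ} (u v : KochVertex m t) :
    (KochGraph m (t+1)).dist (Sum.inl u) (Sum.inl v) = (KochGraph m t).dist u v := by
  apply le_antisymm
  · obtain ⟨W, hW⟩ := ((koch_connected t) u v).exists_walk_length_eq_dist
    calc (KochGraph m (t+1)).dist (Sum.inl u) (Sum.inl v) ≤ (W.map (KochInlHom m t)).length :=
          SimpleGraph.dist_le _
      _ = (KochGraph m t).dist u v := by rw [SimpleGraph.Walk.length_map, hW]
  · obtain ⟨W, hW⟩ := ((koch_connected (t+1)) (Sum.inl u) (Sum.inl v)).exists_walk_length_eq_dist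
    obtain ⟨W', hW'⟩ := exists_walk_pi W
    calc (KochGraph m t).dist u v ≤ W'.length := SimpleGraph.dist_le W'
      _ ≤ W.length := hW'
      _ = _ := hW

end PartA3
section PartA4
variable {m : ℕ}

lemma walk_lower (n : ℕ) {t : ℕ} (τ : KochTri m t) (c : Fin 3) (g : Fin m) (p : Fin 2)
    (v : KochVertex m (t+1)) (W : (KochGraph m (t+1)).Walk (Sum.inr (τ, c, g, p)) v)
    (hn : W.length ≤ n) :
    (∃ p', v = Sum.inr (τ, c, g, p')) ∨
      (KochGraph m (t+1)).dist (Sum.inl (KochCorner m t τ c)) v + 1 ≤ W.length := by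
  induction n generalizing p v with
  | zero =>
    cases W with
    | nil => exact Or.inl ⟨p, rfl⟩
    | cons h W' => exact absurd hn (Nat.not_succ_le_zero _)
  | succ n ih =>
    cases W with
    | nil => exact Or.inl ⟨p, rfl⟩
    | @cons _ y _ h W' =>
      rcases y with w | ⟨τ', c', g', p''⟩
      · obtain rfl : w = KochCorner m t τ c := adj_inl_inr.mp h.symm
        exact Or.inr (by
          have := SimpleGraph.dist_le W'
          exact Nat.succ_le_succ this)
      · obtain ⟨rfl, rfl, rfl, -⟩ := adj_inr_inr.mp h
        rcases ih p'' v W' (by simpa using Nat.succ_le_succ_iff.mp hn) with hl | hr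
        · exact Or.inl hl
        · exact Or.inr (by exact hr.trans (Nat.le_succ _))

lemma dist_inr {t : ℕ} (τ : KochTri m t) (c : Fin 3) (g : Fin m) (p : Fin 2)
    (v : KochVertex m (t+1)) (hv : ∀ p', v ≠ Sum.inr (τ, c, g, p')) :
    (KochGraph m (t+1)).dist (Sum.inr (τ, c, g, p)) v =
      (KochGraph m (t+1)).dist (Sum.inl (KochCorner m t τ c)) v + 1 := by
  apply le_antisymm
  · obtain ⟨W, hW⟩ :=
      ((koch_connected (t+1)) (Sum.inl (KochCorner m t τ c)) v).exists_walk_length_eq_dist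
    have hadj : (KochGraph m (t+1)).Adj (Sum.inr (τ, c, g, p)) (Sum.inl (KochCorner m t τ c)) :=
      (adj_inl_inr.mpr rfl).symm
    have := SimpleGraph.dist_le (W.cons hadj)
    have h2 : (W.cons hadj).length = W.length + 1 := rfl
    omega
  · obtain ⟨W, hW⟩ :=
      ((koch_connected (t+1)) (Sum.inr (τ, c, g, p)) v).exists_walk_length_eq_dist
    rcases walk_lower W.length τ c g p v W le_rfl with ⟨p', rfl⟩ | hr
    · exact absurd rfl (hv p')
    · omega

lemma dist_sib {t : ℕ} (τ : KochTri m t) (c : Fin 3) (g : Fin m) (p p' : Fin 2) :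
    (KochGraph m (t+1)).dist (Sum.inr (τ, c, g, p)) (Sum.inr (τ, c, g, p')) =
      if p = p' then 0 else 1 := by
  split
  · next h => rw [h]; exact SimpleGraph.dist_self
  · next h => exact SimpleGraph.dist_eq_one_iff_adj.mpr (adj_inr_inr.mpr ⟨rfl, rfl, rfl, h⟩)

/-- distance from a new vertex to an old vertex -/
lemma dist_inr_inl {t : ℕ} (τ : KochTri m t) (c : Fin 3) (g : Fin m) (p : Fin 2)
    (v : KochVertex m t) :
    (KochGraph m (t+1)).dist (Sum.inr (τ, c, g, p)) (Sum.inl v) =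
      (KochGraph m t).dist (KochCorner m t τ c) v + 1 := by
  rw [dist_inr τ c g p (Sum.inl v) (fun p' h => by cases h), dist_inl]

/-- distance between new vertices of different groups -/
lemma dist_inr_inr {t : ℕ} (τ τ' : KochTri m t) (c c' : Fin 3) (g g' : Fin m) (p p' : Fin 2)
    (hne : ¬(τ = τ' ∧ c = c' ∧ g = g')) :
    (KochGraph m (t+1)).dist (Sum.inr (τ, c, g, p)) (Sum.inr (τ', c', g', p')) =
      (KochGraph m t).dist (KochCorner m t τ c) (KochCorner m t τ' c') + 2 := by
  rw [dist_inr τ c g p (Sum.inr (τ', c', g', p')) (by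
    intro q h
    rw [kv_inr_inj] at h
    exact hne ⟨(Prod.ext_iff.mp h).1.symm, by
      have := (Prod.ext_iff.mp h).2
      exact (Prod.ext_iff.mp this).1.symm, by
      have := (Prod.ext_iff.mp (Prod.ext_iff.mp h).2).2
      exact (Prod.ext_iff.mp this).1.symm⟩)]
  rw [SimpleGraph.dist_comm (G := KochGraph m (t+1)) (u := Sum.inl (KochCorner m t τ c))
    (v := Sum.inr (τ', c', g', p')),
    dist_inr τ' c' g' p' (Sum.inl (KochCorner m t τ c)) (fun q h => by cases h), dist_inl,
    SimpleGraph.dist_comm]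

end PartA4
section PartB1
variable {m : ℕ}

lemma card_tri (m t : ℕ) : Fintype.card (KochTri m t) = (3*m+1)^t := by
  induction t with
  | zero => exact Fintype.card_unit
  | succ t ih =>
    have h : Fintype.card (KochTri m (t+1)) = Fintype.card (KochTri m t) * (3*m+1) := by
      calc Fintype.card (KochTri m (t+1))
          = Fintype.card (KochTri m t ⊕ (KochTri m t × Fin 3 × Fin m)) := rfl
        _ = Fintype.card (KochTri m t) + Fintype.card (KochTri m t) * (3 * m) := by
            rw [Fintype.card_sum, Fintype.card_prod, Fintype.card_prod, Fintype.card_fin,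
              Fintype.card_fin]
            try ring
        _ = _ := by ring
    rw [h, ih]; ring

lemma card_vertex (m t : ℕ) : Fintype.card (KochVertex m t) = 2*(3*m+1)^t + 1 := by
  induction t with
  | zero => simp [show Fintype.card (KochVertex m 0) = 3 from rfl]
  | succ t ih =>
    have h : Fintype.card (KochVertex m (t+1)) =
        Fintype.card (KochVertex m t) + Fintype.card (KochTri m t) * (6 * m) := by
      calc Fintype.card (KochVertex m (t+1))
          = Fintype.card (KochVertex m t ⊕ (KochTri m t × Fin 3 × Fin m × Fin 2)) := rfl
        _ = _ := by
            rw [Fintype.card_sum, Fintype.card_prod, Fintype.card_prod, Fintype.card_prod,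
              Fintype.card_fin, Fintype.card_fin, Fintype.card_fin]; ring
    rw [h, ih, card_tri]; ring

/-- total (ordered) distance sum -/
noncomputable def Sd (m t : ℕ) : ℝ :=
  ∑ u : KochVertex m t, ∑ v : KochVertex m t, ((KochGraph m t).dist u v : ℝ)

/-- incidence-vertex distance sum -/
noncomputable def Ld (m t : ℕ) : ℝ :=
  ∑ τ : KochTri m t, ∑ c : Fin 3, ∑ v : KochVertex m t,
    ((KochGraph m t).dist (KochCorner m t τ c) v : ℝ)

/-- incidence-incidence distance sum -/
noncomputable def Pd (m t : ℕ) : ℝ :=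
  ∑ τ : KochTri m t, ∑ c : Fin 3, ∑ τ' : KochTri m t, ∑ c' : Fin 3,
    ((KochGraph m t).dist (KochCorner m t τ c) (KochCorner m t τ' c') : ℝ)

lemma kochDist_zero (u v : KochVertex m 0) :
    (KochGraph m 0).dist u v = if u = v then 0 else 1 := by
  split
  · next h => rw [h, SimpleGraph.dist_self]
  · next h => exact SimpleGraph.dist_eq_one_iff_adj.mpr ⟨h, (), u, v, rfl, rfl⟩

lemma kochDist_zero' (u v : Fin 3) :
    (KochGraph m 0).dist u v = if u = v then 0 else 1 :=
  kochDist_zero u v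

lemma sum_vertex_zero (f : KochVertex m 0 → ℝ) :
    ∑ v : KochVertex m 0, f v = f (0 : Fin 3) + f (1 : Fin 3) + f (2 : Fin 3) :=
  Fin.sum_univ_three f

lemma Sd_zero : Sd m 0 = 6 := by
  rw [Sd, sum_vertex_zero]
  rw [sum_vertex_zero (fun v => ((KochGraph m 0).dist (0 : Fin 3) v : ℝ)),
      sum_vertex_zero (fun v => ((KochGraph m 0).dist (1 : Fin 3) v : ℝ)),
      sum_vertex_zero (fun v => ((KochGraph m 0).dist (2 : Fin 3) v : ℝ))]
  simp only [kochDist_zero']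
  have h01 : ((0 : Fin 3) : KochVertex m 0) ≠ (1 : Fin 3) := by decide
  have h02 : ((0 : Fin 3) : KochVertex m 0) ≠ (2 : Fin 3) := by decide
  have h12 : ((1 : Fin 3) : KochVertex m 0) ≠ (2 : Fin 3) := by decide
  norm_num [h01, h02, h12, h01.symm, h02.symm, h12.symm]

end PartB1
section PartB2
variable {m : ℕ}

/-- sum of distances from a vertex to all vertices -/
noncomputable def Gam (m t : ℕ) (u : KochVertex m t) : ℝ :=
  ∑ v : KochVertex m t, ((KochGraph m t).dist u v : ℝ)

/-- sum of distances from all corner incidences to a vertex -/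
noncomputable def Lam (m t : ℕ) (u : KochVertex m t) : ℝ :=
  ∑ τ : KochTri m t, ∑ c : Fin 3, ((KochGraph m t).dist (KochCorner m t τ c) u : ℝ)

lemma lam_comm (t : ℕ) (u : KochVertex m t) :
    ∑ τ : KochTri m t, ∑ c : Fin 3, ((KochGraph m t).dist u (KochCorner m t τ c) : ℝ) =
      Lam m t u := by
  unfold Lam
  refine Finset.sum_congr rfl fun τ _ => Finset.sum_congr rfl fun c _ => ?_
  rw [SimpleGraph.dist_comm]

lemma agg_gam (t : ℕ) : ∑ u : KochVertex m t, Gam m t u = Sd m t := rfl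

lemma agg_lam (t : ℕ) : ∑ u : KochVertex m t, Lam m t u = Ld m t := by
  unfold Lam Ld
  rw [Finset.sum_comm]
  exact Finset.sum_congr rfl fun τ _ => Finset.sum_comm

lemma agg_gam_cor (t : ℕ) :
    ∑ τ : KochTri m t, ∑ c : Fin 3, Gam m t (KochCorner m t τ c) = Ld m t := rfl

lemma agg_lam_cor (t : ℕ) :
    ∑ τ : KochTri m t, ∑ c : Fin 3, Lam m t (KochCorner m t τ c) = Pd m t := by
  unfold Lam Pd
  refine Finset.sum_congr rfl fun τ _ => Finset.sum_congr rfl fun c _ =>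
    Finset.sum_congr rfl fun τ' _ => Finset.sum_congr rfl fun c' _ => ?_
  rw [SimpleGraph.dist_comm]

lemma sum_vertex_succ (t : ℕ) (f : KochVertex m (t+1) → ℝ) :
    ∑ v : KochVertex m (t+1), f v = (∑ v : KochVertex m t, f (Sum.inl v)) +
      ∑ a : KochTri m t × Fin 3 × Fin m × Fin 2, f (Sum.inr a) :=
  Fintype.sum_sum_type f

lemma sum_tri_succ (t : ℕ) (f : KochTri m (t+1) → ℝ) :
    ∑ T : KochTri m (t+1), f T = (∑ τ : KochTri m t, f (Sum.inl τ)) +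
      ∑ γ : KochTri m t × Fin 3 × Fin m, f (Sum.inr γ) :=
  Fintype.sum_sum_type f

lemma sum_pairs (t : ℕ) (f : KochTri m t × Fin 3 × Fin m × Fin 2 → ℝ) :
    ∑ a : KochTri m t × Fin 3 × Fin m × Fin 2, f a =
      ∑ γ : KochTri m t × Fin 3 × Fin m, (f (γ.1, γ.2.1, γ.2.2, 0) + f (γ.1, γ.2.1, γ.2.2, 1)) := by
  rw [show (∑ a : KochTri m t × Fin 3 × Fin m × Fin 2, f a) =
      ∑ τ : KochTri m t, ∑ c : Fin 3, ∑ g : Fin m, ∑ p : Fin 2, f (τ, c, g, p) by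
    simp [Fintype.sum_prod_type]]
  rw [show (∑ γ : KochTri m t × Fin 3 × Fin m,
        (f (γ.1, γ.2.1, γ.2.2, 0) + f (γ.1, γ.2.1, γ.2.2, 1))) =
      ∑ τ : KochTri m t, ∑ c : Fin 3, ∑ g : Fin m, (f (τ, c, g, 0) + f (τ, c, g, 1)) by
    simp [Fintype.sum_prod_type]]
  refine Finset.sum_congr rfl fun τ _ => Finset.sum_congr rfl fun c _ =>
    Finset.sum_congr rfl fun g _ => ?_
  rw [Fin.sum_univ_two]

lemma sum_gamma (t : ℕ) (h : KochTri m t → Fin 3 → ℝ) :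
    ∑ γ : KochTri m t × Fin 3 × Fin m, h γ.1 γ.2.1 =
      m * ∑ τ : KochTri m t, ∑ c : Fin 3, h τ c := by
  rw [show (∑ γ : KochTri m t × Fin 3 × Fin m, h γ.1 γ.2.1) =
      ∑ τ : KochTri m t, ∑ c : Fin 3, ∑ _g : Fin m, h τ c by simp [Fintype.sum_prod_type]]
  rw [Finset.mul_sum]
  refine Finset.sum_congr rfl fun τ _ => ?_
  rw [Finset.mul_sum]
  refine Finset.sum_congr rfl fun c _ => ?_
  simp [mul_comm]

/-- expansion of a sum over corner incidences at level `t+1` -/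
lemma expand_incidence (t : ℕ) (f : KochVertex m (t+1) → ℝ) :
    (∑ T : KochTri m (t+1), ∑ c : Fin 3, f (KochCorner m (t+1) T c)) =
      (∑ τ : KochTri m t, ∑ c : Fin 3, f (Sum.inl (KochCorner m t τ c))) +
      ∑ γ : KochTri m t × Fin 3 × Fin m,
        (f (Sum.inl (KochCorner m t γ.1 γ.2.1)) + f (Sum.inr (γ.1, γ.2.1, γ.2.2, 0)) +
          f (Sum.inr (γ.1, γ.2.1, γ.2.2, 1))) := by
  rw [sum_tri_succ]
  congr 1
  refine Finset.sum_congr rfl fun γ _ => ?_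
  obtain ⟨τ, c, g⟩ := γ
  rw [Fin.sum_univ_three]
  simp [kochCorner_succ_inr]

end PartB2
section PartB3
variable {m : ℕ}

lemma sum_inc_affine (t : ℕ) (a b : ℝ) (u : KochVertex m t) :
    ∑ τ : KochTri m t, ∑ c : Fin 3,
      (a * ((KochGraph m t).dist (KochCorner m t τ c) u : ℝ) + b) =
      a * Lam m t u + 3 * (3*(m:ℝ)+1)^t * b := by
  unfold Lam
  simp only [Finset.sum_add_distrib, ← Finset.mul_sum, Finset.sum_const, Finset.card_univ,
    Fintype.card_fin, nsmul_eq_mul]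
  rw [card_tri]
  push_cast
  ring

lemma sum_vtx_affine (t : ℕ) (a b : ℝ) (u : KochVertex m t) :
    ∑ v : KochVertex m t, (a * ((KochGraph m t).dist u v : ℝ) + b) =
      a * Gam m t u + (2*(3*(m:ℝ)+1)^t + 1) * b := by
  unfold Gam
  simp only [Finset.sum_add_distrib, ← Finset.mul_sum, Finset.sum_const, Finset.card_univ,
    nsmul_eq_mul]
  rw [card_vertex]
  push_cast
  ring

lemma dist_inl_inr (t : ℕ) (v : KochVertex m t) (τ : KochTri m t) (c : Fin 3) (g : Fin m)
    (p : Fin 2) :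
    (KochGraph m (t+1)).dist (Sum.inl v) (Sum.inr (τ, c, g, p)) =
      (KochGraph m t).dist (KochCorner m t τ c) v + 1 := by
  rw [SimpleGraph.dist_comm (G := KochGraph m (t+1)) (u := Sum.inl v) (v := Sum.inr (τ, c, g, p))]
  exact dist_inr_inl τ c g p v

lemma Lam_succ_inl (t : ℕ) (u : KochVertex m t) :
    Lam m (t+1) (Sum.inl u) = (3*(m:ℝ)+1) * Lam m t u + 6*(m:ℝ)*(3*(m:ℝ)+1)^t := by
  have h := expand_incidence t (fun y => ((KochGraph m (t+1)).dist y (Sum.inl u) : ℝ))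
  rw [show Lam m (t+1) (Sum.inl u) = ∑ T : KochTri m (t+1), ∑ c : Fin 3,
    ((KochGraph m (t+1)).dist (KochCorner m (t+1) T c) (Sum.inl u) : ℝ) from rfl, h]
  have h1 : (∑ τ : KochTri m t, ∑ c : Fin 3,
      ((KochGraph m (t+1)).dist (Sum.inl (KochCorner m t τ c)) (Sum.inl u) : ℝ)) =
      Lam m t u := by
    unfold Lam
    refine Finset.sum_congr rfl fun τ _ => Finset.sum_congr rfl fun c _ => ?_
    rw [dist_inl]
  have h2 : (∑ γ : KochTri m t × Fin 3 × Fin m,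
      (((KochGraph m (t+1)).dist (Sum.inl (KochCorner m t γ.1 γ.2.1)) (Sum.inl u) : ℝ) +
        ((KochGraph m (t+1)).dist (Sum.inr (γ.1, γ.2.1, γ.2.2, 0)) (Sum.inl u) : ℝ) +
        ((KochGraph m (t+1)).dist (Sum.inr (γ.1, γ.2.1, γ.2.2, 1)) (Sum.inl u) : ℝ))) =
      m * ∑ τ : KochTri m t, ∑ c : Fin 3,
        (3 * ((KochGraph m t).dist (KochCorner m t τ c) u : ℝ) + 2) := by
    rw [← sum_gamma]
    refine Finset.sum_congr rfl fun γ _ => ?_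
    rw [dist_inl, dist_inr_inl, dist_inr_inl]
    push_cast
    ring
  rw [h1, h2, sum_inc_affine]
  ring

lemma Gam_succ_inl (t : ℕ) (u : KochVertex m t) :
    Gam m (t+1) (Sum.inl u) = Gam m t u + 2*(m:ℝ) * Lam m t u + 6*(m:ℝ)*(3*(m:ℝ)+1)^t := by
  rw [show Gam m (t+1) (Sum.inl u) = ∑ v : KochVertex m (t+1),
    ((KochGraph m (t+1)).dist (Sum.inl u) v : ℝ) from rfl, sum_vertex_succ]
  have h1 : (∑ v : KochVertex m t,
      ((KochGraph m (t+1)).dist (Sum.inl u) (Sum.inl v) : ℝ)) = Gam m t u := by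
    refine Finset.sum_congr rfl fun v _ => ?_
    rw [dist_inl]
  have h2 : (∑ a : KochTri m t × Fin 3 × Fin m × Fin 2,
      ((KochGraph m (t+1)).dist (Sum.inl u) (Sum.inr a) : ℝ)) =
      m * ∑ τ : KochTri m t, ∑ c : Fin 3,
        (2 * ((KochGraph m t).dist (KochCorner m t τ c) u : ℝ) + 2) := by
    rw [sum_pairs, ← sum_gamma]
    refine Finset.sum_congr rfl fun γ _ => ?_
    simp only [dist_inl_inr]
    push_cast
    ring
  rw [h1, h2, sum_inc_affine]
  ring

lemma pair_dist (t : ℕ) (τ₀ : KochTri m t) (c₀ : Fin 3) (g₀ : Fin m) (p : Fin 2)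
    (γ : KochTri m t × Fin 3 × Fin m) :
    ((KochGraph m (t+1)).dist (Sum.inr (γ.1, γ.2.1, γ.2.2, 0)) (Sum.inr (τ₀, c₀, g₀, p)) : ℝ) +
      ((KochGraph m (t+1)).dist (Sum.inr (γ.1, γ.2.1, γ.2.2, 1)) (Sum.inr (τ₀, c₀, g₀, p)) : ℝ) =
      2 * ((KochGraph m t).dist (KochCorner m t γ.1 γ.2.1) (KochCorner m t τ₀ c₀) : ℝ) + 4 -
        (if γ = (τ₀, c₀, g₀) then 3 else 0) := by
  obtain ⟨τ, c, g⟩ := γ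
  by_cases h : (τ, c, g) = (τ₀, c₀, g₀)
  · obtain ⟨rfl, rfl, rfl⟩ : τ = τ₀ ∧ c = c₀ ∧ g = g₀ := by simpa [Prod.ext_iff] using h
    fin_cases p <;> simp [dist_sib, SimpleGraph.dist_self] <;> norm_num
  · have hne : ¬(τ = τ₀ ∧ c = c₀ ∧ g = g₀) := by
      intro ⟨h1, h2, h3⟩; exact h (by rw [h1, h2, h3])
    rw [dist_inr_inr _ _ _ _ _ _ _ _ hne, dist_inr_inr _ _ _ _ _ _ _ _ hne]
    push_cast
    simp only [if_neg h]
    ring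

lemma Lam_succ_inr (t : ℕ) (τ₀ : KochTri m t) (c₀ : Fin 3) (g₀ : Fin m) (p : Fin 2) :
    Lam m (t+1) (Sum.inr (τ₀, c₀, g₀, p)) =
      (3*(m:ℝ)+1) * Lam m t (KochCorner m t τ₀ c₀) +
        (3*(3*(m:ℝ)+1)^t + 15*(m:ℝ)*(3*(m:ℝ)+1)^t - 3) := by
  have h := expand_incidence t
    (fun y => ((KochGraph m (t+1)).dist y (Sum.inr (τ₀, c₀, g₀, p)) : ℝ))
  rw [show Lam m (t+1) (Sum.inr (τ₀, c₀, g₀, p)) = ∑ T : KochTri m (t+1), ∑ c : Fin 3,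
    ((KochGraph m (t+1)).dist (KochCorner m (t+1) T c) (Sum.inr (τ₀, c₀, g₀, p)) : ℝ) from rfl, h]
  have h1 : (∑ τ : KochTri m t, ∑ c : Fin 3,
      ((KochGraph m (t+1)).dist (Sum.inl (KochCorner m t τ c)) (Sum.inr (τ₀, c₀, g₀, p)) : ℝ)) =
      ∑ τ : KochTri m t, ∑ c : Fin 3,
        (1 * ((KochGraph m t).dist (KochCorner m t τ c) (KochCorner m t τ₀ c₀) : ℝ) + 1) := by
    refine Finset.sum_congr rfl fun τ _ => Finset.sum_congr rfl fun c _ => ?_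
    rw [dist_inl_inr, SimpleGraph.dist_comm]
    push_cast
    ring
  have h2 : (∑ γ : KochTri m t × Fin 3 × Fin m,
      (((KochGraph m (t+1)).dist (Sum.inl (KochCorner m t γ.1 γ.2.1))
          (Sum.inr (τ₀, c₀, g₀, p)) : ℝ) +
        ((KochGraph m (t+1)).dist (Sum.inr (γ.1, γ.2.1, γ.2.2, 0))
          (Sum.inr (τ₀, c₀, g₀, p)) : ℝ) +
        ((KochGraph m (t+1)).dist (Sum.inr (γ.1, γ.2.1, γ.2.2, 1))
          (Sum.inr (τ₀, c₀, g₀, p)) : ℝ))) =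
      (∑ γ : KochTri m t × Fin 3 × Fin m,
        (3 * ((KochGraph m t).dist (KochCorner m t γ.1 γ.2.1) (KochCorner m t τ₀ c₀) : ℝ) + 5))
        - 3 := by
    have hpt : ∀ γ : KochTri m t × Fin 3 × Fin m,
        (((KochGraph m (t+1)).dist (Sum.inl (KochCorner m t γ.1 γ.2.1))
            (Sum.inr (τ₀, c₀, g₀, p)) : ℝ) +
          ((KochGraph m (t+1)).dist (Sum.inr (γ.1, γ.2.1, γ.2.2, 0))
            (Sum.inr (τ₀, c₀, g₀, p)) : ℝ) +
          ((KochGraph m (t+1)).dist (Sum.inr (γ.1, γ.2.1, γ.2.2, 1))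
            (Sum.inr (τ₀, c₀, g₀, p)) : ℝ)) =
        (3 * ((KochGraph m t).dist (KochCorner m t γ.1 γ.2.1) (KochCorner m t τ₀ c₀) : ℝ) + 5)
          - (if γ = (τ₀, c₀, g₀) then 3 else 0) := by
      intro γ
      have hp := pair_dist t τ₀ c₀ g₀ p γ
      have hf : ((KochGraph m (t+1)).dist (Sum.inl (KochCorner m t γ.1 γ.2.1))
          (Sum.inr (τ₀, c₀, g₀, p)) : ℝ) =
          ((KochGraph m t).dist (KochCorner m t γ.1 γ.2.1) (KochCorner m t τ₀ c₀) : ℝ) + 1 := by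
        rw [dist_inl_inr, SimpleGraph.dist_comm]
        push_cast
        ring
      rw [hf]
      linarith [hp]
    rw [Finset.sum_congr rfl (fun γ _ => hpt γ), Finset.sum_sub_distrib]
    congr 1
    rw [Finset.sum_ite_eq' Finset.univ (τ₀, c₀, g₀) (fun _ => (3:ℝ))]
    simp
  rw [h1, h2, sum_inc_affine t 1 1, sum_gamma t (fun τ c =>
    (3 * ((KochGraph m t).dist (KochCorner m t τ c) (KochCorner m t τ₀ c₀) : ℝ) + 5)),
    sum_inc_affine t 3 5]
  ring

end PartB3
section PartB4
variable {m : ℕ}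

lemma Gam_succ_inr (t : ℕ) (τ₀ : KochTri m t) (c₀ : Fin 3) (g₀ : Fin m) (p : Fin 2) :
    Gam m (t+1) (Sum.inr (τ₀, c₀, g₀, p)) =
      Gam m t (KochCorner m t τ₀ c₀) + 2*(m:ℝ) * Lam m t (KochCorner m t τ₀ c₀) +
        ((2*(3*(m:ℝ)+1)^t + 1) + 12*(m:ℝ)*(3*(m:ℝ)+1)^t - 3) := by
  rw [show Gam m (t+1) (Sum.inr (τ₀, c₀, g₀, p)) = ∑ v : KochVertex m (t+1),
    ((KochGraph m (t+1)).dist (Sum.inr (τ₀, c₀, g₀, p)) v : ℝ) from rfl, sum_vertex_succ]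
  have h1 : (∑ v : KochVertex m t,
      ((KochGraph m (t+1)).dist (Sum.inr (τ₀, c₀, g₀, p)) (Sum.inl v) : ℝ)) =
      1 * Gam m t (KochCorner m t τ₀ c₀) + (2*(3*(m:ℝ)+1)^t + 1) * 1 := by
    rw [← sum_vtx_affine t 1 1]
    refine Finset.sum_congr rfl fun v _ => ?_
    rw [dist_inr_inl]
    push_cast
    ring
  have h2 : (∑ a : KochTri m t × Fin 3 × Fin m × Fin 2,
      ((KochGraph m (t+1)).dist (Sum.inr (τ₀, c₀, g₀, p)) (Sum.inr a) : ℝ)) =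
      (∑ γ : KochTri m t × Fin 3 × Fin m,
        (2 * ((KochGraph m t).dist (KochCorner m t γ.1 γ.2.1) (KochCorner m t τ₀ c₀) : ℝ) + 4))
        - 3 := by
    rw [sum_pairs]
    have hpt : ∀ γ : KochTri m t × Fin 3 × Fin m,
        (((KochGraph m (t+1)).dist (Sum.inr (τ₀, c₀, g₀, p)) (Sum.inr (γ.1, γ.2.1, γ.2.2, 0)) : ℝ) +
          ((KochGraph m (t+1)).dist (Sum.inr (τ₀, c₀, g₀, p)) (Sum.inr (γ.1, γ.2.1, γ.2.2, 1)) : ℝ)) =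
        (2 * ((KochGraph m t).dist (KochCorner m t γ.1 γ.2.1) (KochCorner m t τ₀ c₀) : ℝ) + 4)
          - (if γ = (τ₀, c₀, g₀) then 3 else 0) := by
      intro γ
      rw [SimpleGraph.dist_comm (G := KochGraph m (t+1)) (u := Sum.inr (τ₀, c₀, g₀, p))
          (v := Sum.inr (γ.1, γ.2.1, γ.2.2, 0)),
        SimpleGraph.dist_comm (G := KochGraph m (t+1)) (u := Sum.inr (τ₀, c₀, g₀, p))
          (v := Sum.inr (γ.1, γ.2.1, γ.2.2, 1))]
      exact pair_dist t τ₀ c₀ g₀ p γ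
    rw [Finset.sum_congr rfl (fun γ _ => hpt γ), Finset.sum_sub_distrib]
    congr 1
    rw [Finset.sum_ite_eq' Finset.univ (τ₀, c₀, g₀) (fun _ => (3:ℝ))]
    simp
  rw [h1, h2, sum_gamma t (fun τ c =>
    (2 * ((KochGraph m t).dist (KochCorner m t τ c) (KochCorner m t τ₀ c₀) : ℝ) + 4)),
    sum_inc_affine t 2 4]
  ring

lemma sum_inc_combo (t : ℕ) (a b k : ℝ) :
    ∑ τ : KochTri m t, ∑ c : Fin 3,
      (a * Gam m t (KochCorner m t τ c) + b * Lam m t (KochCorner m t τ c) + k) =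
      a * Ld m t + b * Pd m t + 3 * (3*(m:ℝ)+1)^t * k := by
  simp only [Finset.sum_add_distrib, ← Finset.mul_sum, Finset.sum_const, Finset.card_univ,
    Fintype.card_fin, nsmul_eq_mul, agg_gam_cor, agg_lam_cor]
  rw [card_tri]
  push_cast
  ring

lemma sum_vtx_combo (t : ℕ) (a b k : ℝ) :
    ∑ u : KochVertex m t, (a * Gam m t u + b * Lam m t u + k) =
      a * Sd m t + b * Ld m t + (2*(3*(m:ℝ)+1)^t + 1) * k := by
  simp only [Finset.sum_add_distrib, ← Finset.mul_sum, Finset.sum_const, Finset.card_univ,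
    nsmul_eq_mul, agg_gam, agg_lam]
  rw [card_vertex]
  push_cast
  ring

lemma Ld_zero : Ld m 0 = 6 := by
  haveI : Unique (KochTri m 0) := inferInstanceAs (Unique Unit)
  rw [Ld, Fintype.sum_unique]
  rw [show (∑ c : Fin 3, ∑ v : KochVertex m 0,
    ((KochGraph m 0).dist (KochCorner m 0 default c) v : ℝ)) =
    ∑ c : Fin 3, ∑ v : KochVertex m 0, ((KochGraph m 0).dist c v : ℝ) from rfl]
  rw [Fin.sum_univ_three]
  rw [sum_vertex_zero (fun v => ((KochGraph m 0).dist (0 : Fin 3) v : ℝ)),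
      sum_vertex_zero (fun v => ((KochGraph m 0).dist (1 : Fin 3) v : ℝ)),
      sum_vertex_zero (fun v => ((KochGraph m 0).dist (2 : Fin 3) v : ℝ))]
  simp only [kochDist_zero']
  have h01 : ((0 : Fin 3) : KochVertex m 0) ≠ (1 : Fin 3) := by decide
  have h02 : ((0 : Fin 3) : KochVertex m 0) ≠ (2 : Fin 3) := by decide
  have h12 : ((1 : Fin 3) : KochVertex m 0) ≠ (2 : Fin 3) := by decide
  norm_num [h01, h02, h12, h01.symm, h02.symm, h12.symm]

lemma Pd_zero : Pd m 0 = 6 := by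
  haveI : Unique (KochTri m 0) := inferInstanceAs (Unique Unit)
  rw [Pd]
  rw [Fintype.sum_unique]
  rw [show (∑ c : Fin 3, ∑ τ' : KochTri m 0, ∑ c' : Fin 3,
      ((KochGraph m 0).dist (KochCorner m 0 default c) (KochCorner m 0 τ' c') : ℝ)) =
    ∑ c : Fin 3, ∑ τ' : KochTri m 0, ∑ c' : Fin 3,
      ((KochGraph m 0).dist c c' : ℝ) from rfl]
  have hin : ∀ c : Fin 3, (∑ τ' : KochTri m 0, ∑ c' : Fin 3,
      ((KochGraph m 0).dist c c' : ℝ)) = ∑ c' : Fin 3, ((KochGraph m 0).dist c c' : ℝ) :=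
    fun c => Fintype.sum_unique _
  rw [Fin.sum_univ_three, hin, hin, hin, Fin.sum_univ_three, Fin.sum_univ_three,
    Fin.sum_univ_three]
  simp only [kochDist_zero']
  have h01 : ((0 : Fin 3) : KochVertex m 0) ≠ (1 : Fin 3) := by decide
  have h02 : ((0 : Fin 3) : KochVertex m 0) ≠ (2 : Fin 3) := by decide
  have h12 : ((1 : Fin 3) : KochVertex m 0) ≠ (2 : Fin 3) := by decide
  norm_num [h01, h02, h12, h01.symm, h02.symm, h12.symm]

end PartB4
section PartB5
variable {m : ℕ}

lemma Sd_succ (t : ℕ) : Sd m (t+1) = Sd m t + 4*(m:ℝ)*Ld m t + 4*(m:ℝ)^2*Pd m t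
    + 12*(m:ℝ)*(3*(m:ℝ)+1)^t*(2*(3*(m:ℝ)+1)^t+1) + 72*(m:ℝ)^2*((3*(m:ℝ)+1)^t)^2
    - 18*(m:ℝ)*(3*(m:ℝ)+1)^t := by
  rw [← agg_gam (m := m) (t+1), sum_vertex_succ]
  have b1 : (∑ u : KochVertex m t, Gam m (t+1) (Sum.inl u)) =
      1 * Sd m t + (2*(m:ℝ)) * Ld m t + (2*(3*(m:ℝ)+1)^t + 1) * (6*(m:ℝ)*(3*(m:ℝ)+1)^t) := by
    rw [← sum_vtx_combo t 1 (2*(m:ℝ)) (6*(m:ℝ)*(3*(m:ℝ)+1)^t)]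
    refine Finset.sum_congr rfl fun u _ => ?_
    rw [Gam_succ_inl]
    ring
  have b2 : (∑ a : KochTri m t × Fin 3 × Fin m × Fin 2, Gam m (t+1) (Sum.inr a)) =
      m * (2 * Ld m t + (4*(m:ℝ)) * Pd m t + 3*(3*(m:ℝ)+1)^t *
        (2*((2*(3*(m:ℝ)+1)^t + 1) + 12*(m:ℝ)*(3*(m:ℝ)+1)^t - 3))) := by
    rw [← sum_inc_combo t 2 (4*(m:ℝ))
      (2*((2*(3*(m:ℝ)+1)^t + 1) + 12*(m:ℝ)*(3*(m:ℝ)+1)^t - 3)), sum_pairs, ← sum_gamma]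
    refine Finset.sum_congr rfl fun γ _ => ?_
    rw [Gam_succ_inr, Gam_succ_inr]
    ring
  rw [b1, b2]
  ring

lemma Ld_succ (t : ℕ) : Ld m (t+1) = (1+3*(m:ℝ))*Ld m t + (2*(m:ℝ)+6*(m:ℝ)^2)*Pd m t
    + 30*(m:ℝ)*((3*(m:ℝ)+1)^t)^2 + 90*(m:ℝ)^2*((3*(m:ℝ)+1)^t)^2
    - 12*(m:ℝ)*(3*(m:ℝ)+1)^t := by
  rw [← agg_gam_cor (m := m) (t+1), expand_incidence t (Gam m (t+1))]
  have b1 : (∑ τ : KochTri m t, ∑ c : Fin 3, Gam m (t+1) (Sum.inl (KochCorner m t τ c))) =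
      1 * Ld m t + (2*(m:ℝ)) * Pd m t + 3*(3*(m:ℝ)+1)^t * (6*(m:ℝ)*(3*(m:ℝ)+1)^t) := by
    rw [← sum_inc_combo t 1 (2*(m:ℝ)) (6*(m:ℝ)*(3*(m:ℝ)+1)^t)]
    refine Finset.sum_congr rfl fun τ _ => Finset.sum_congr rfl fun c _ => ?_
    rw [Gam_succ_inl]
    ring
  have b2 : (∑ γ : KochTri m t × Fin 3 × Fin m,
      (Gam m (t+1) (Sum.inl (KochCorner m t γ.1 γ.2.1)) +
        Gam m (t+1) (Sum.inr (γ.1, γ.2.1, γ.2.2, 0)) +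
        Gam m (t+1) (Sum.inr (γ.1, γ.2.1, γ.2.2, 1)))) =
      m * (3 * Ld m t + (6*(m:ℝ)) * Pd m t + 3*(3*(m:ℝ)+1)^t *
        (6*(m:ℝ)*(3*(m:ℝ)+1)^t + 2*((2*(3*(m:ℝ)+1)^t + 1) + 12*(m:ℝ)*(3*(m:ℝ)+1)^t - 3))) := by
    rw [← sum_inc_combo t 3 (6*(m:ℝ))
      (6*(m:ℝ)*(3*(m:ℝ)+1)^t + 2*((2*(3*(m:ℝ)+1)^t + 1) + 12*(m:ℝ)*(3*(m:ℝ)+1)^t - 3)),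
      ← sum_gamma]
    refine Finset.sum_congr rfl fun γ _ => ?_
    rw [Gam_succ_inl, Gam_succ_inr, Gam_succ_inr]
    ring
  rw [b1, b2]
  ring

lemma Pd_succ (t : ℕ) : Pd m (t+1) = (3*(m:ℝ)+1)^2*Pd m t
    + 36*(m:ℝ)*((3*(m:ℝ)+1)^t)^2 + 108*(m:ℝ)^2*((3*(m:ℝ)+1)^t)^2
    - 18*(m:ℝ)*(3*(m:ℝ)+1)^t := by
  rw [← agg_lam_cor (m := m) (t+1), expand_incidence t (Lam m (t+1))]
  have b1 : (∑ τ : KochTri m t, ∑ c : Fin 3, Lam m (t+1) (Sum.inl (KochCorner m t τ c))) =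
      0 * Ld m t + (3*(m:ℝ)+1) * Pd m t + 3*(3*(m:ℝ)+1)^t * (6*(m:ℝ)*(3*(m:ℝ)+1)^t) := by
    rw [← sum_inc_combo t 0 (3*(m:ℝ)+1) (6*(m:ℝ)*(3*(m:ℝ)+1)^t)]
    refine Finset.sum_congr rfl fun τ _ => Finset.sum_congr rfl fun c _ => ?_
    rw [Lam_succ_inl]
    ring
  have b2 : (∑ γ : KochTri m t × Fin 3 × Fin m,
      (Lam m (t+1) (Sum.inl (KochCorner m t γ.1 γ.2.1)) +
        Lam m (t+1) (Sum.inr (γ.1, γ.2.1, γ.2.2, 0)) +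
        Lam m (t+1) (Sum.inr (γ.1, γ.2.1, γ.2.2, 1)))) =
      m * (0 * Ld m t + (3*(3*(m:ℝ)+1)) * Pd m t + 3*(3*(m:ℝ)+1)^t *
        (6*(m:ℝ)*(3*(m:ℝ)+1)^t +
          2*(3*(3*(m:ℝ)+1)^t + 15*(m:ℝ)*(3*(m:ℝ)+1)^t - 3))) := by
    rw [← sum_inc_combo t 0 (3*(3*(m:ℝ)+1))
      (6*(m:ℝ)*(3*(m:ℝ)+1)^t + 2*(3*(3*(m:ℝ)+1)^t + 15*(m:ℝ)*(3*(m:ℝ)+1)^t - 3)),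
      ← sum_gamma]
    refine Finset.sum_congr rfl fun γ _ => ?_
    rw [Lam_succ_inl, Lam_succ_inr, Lam_succ_inr]
    ring
  rw [b1, b2]
  ring

end PartB5
section PartC
variable {m : ℕ}

lemma Pd_cf (t : ℕ) : (3*(m:ℝ)+1) * Pd m t =
    (6*(3*(m:ℝ)+1) + 36*(m:ℝ)*(t:ℝ) - 6) * ((3*(m:ℝ)+1)^t)^2 + 6*(3*(m:ℝ)+1)^t := by
  induction t with
  | zero => rw [Pd_zero]; push_cast; ring
  | succ t ih =>
    rw [Pd_succ, pow_succ]
    push_cast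
    linear_combination ((3*(m:ℝ)+1)^2) * ih

lemma Ld_cf (t : ℕ) : (3*(m:ℝ)+1) * Ld m t =
    ((8*(t:ℝ)+6)*(3*(m:ℝ)+1) - (8*(t:ℝ)+4)) * ((3*(m:ℝ)+1)^t)^2 + 4*(3*(m:ℝ)+1)^t := by
  induction t with
  | zero => rw [Ld_zero]; push_cast; ring
  | succ t ih =>
    rw [Ld_succ, pow_succ]
    push_cast
    linear_combination ((3*(m:ℝ)+1)) * ih + (2*(m:ℝ)+6*(m:ℝ)^2) * Pd_cf t

lemma Sd_cf (t : ℕ) : 3*(3*(m:ℝ)+1) * Sd m t =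
    48*(m:ℝ)*(t:ℝ)*((3*(m:ℝ)+1)^t)^2 + 8*(6*(m:ℝ)+1)*((3*(m:ℝ)+1)^t)^2
      + 2*(3*(m:ℝ)+5)*(3*(m:ℝ)+1)^t := by
  induction t with
  | zero => rw [Sd_zero]; push_cast; ring
  | succ t ih =>
    rw [Sd_succ, pow_succ]
    push_cast
    linear_combination ih + 12*(m:ℝ)*(Ld_cf t) + 12*(m:ℝ)^2*(Pd_cf t)

end PartC
/-- For every integer m ≥ 1, as t → ∞ the average path length `d_t` of the Koch
network `K_{m,t}` satisfies `d_t / t → 4m/(3m+1)`. -/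
theorem koch_apl_limit (m : ℕ) (hm : 1 ≤ m) :
    Filter.Tendsto (fun t : ℕ =>
        (((∑ u : KochVertex m t, ∑ v : KochVertex m t, ((KochGraph m t).dist u v : ℝ)) / 2) /
            ((Fintype.card (KochVertex m t) : ℝ) *
              ((Fintype.card (KochVertex m t) : ℝ) - 1) / 2)) / (t : ℝ))
      Filter.atTop (nhds (4 * (m : ℝ) / (3 * m + 1))) := by
  have hm' : (1:ℝ) ≤ m := by exact_mod_cast hm
  set b : ℝ := 3*(m:ℝ)+1 with hbdef
  have hb1 : (1:ℝ) < b := by rw [hbdef]; linarith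
  have hb0 : (0:ℝ) < b := by linarith
  set g : ℕ → ℝ := fun t =>
    (48*(m:ℝ) + 8*(6*(m:ℝ)+1)*(1/(t:ℝ)) + 2*(3*(m:ℝ)+5)*((1/b)^t*(1/(t:ℝ)))) /
      (3*b*(4 + 2*(1/b)^t)) with hgdef
  have h1 : Filter.Tendsto (fun t : ℕ => 1/(t:ℝ)) Filter.atTop (nhds 0) :=
    tendsto_one_div_atTop_nhds_zero_nat
  have h2 : Filter.Tendsto (fun t : ℕ => (1/b)^t) Filter.atTop (nhds 0) := by
    apply tendsto_pow_atTop_nhds_zero_of_lt_one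
    · positivity
    · rw [div_lt_one hb0]; linarith
  have hnum : Filter.Tendsto
      (fun t : ℕ => 48*(m:ℝ) + 8*(6*(m:ℝ)+1)*(1/(t:ℝ)) + 2*(3*(m:ℝ)+5)*((1/b)^t*(1/(t:ℝ))))
      Filter.atTop (nhds (48*(m:ℝ) + 8*(6*(m:ℝ)+1)*0 + 2*(3*(m:ℝ)+5)*(0*0))) := by
    exact ((tendsto_const_nhds.add ((h1.const_mul _))).add ((h2.mul h1).const_mul _))
  have hden : Filter.Tendsto (fun t : ℕ => 3*b*(4 + 2*(1/b)^t))
      Filter.atTop (nhds (3*b*(4 + 2*0))) := by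
    exact ((tendsto_const_nhds.add (h2.const_mul _)).const_mul _)
  have hden0 : 3*b*(4 + 2*(0:ℝ)) ≠ 0 := by positivity
  have hg : Filter.Tendsto g Filter.atTop
      (nhds ((48*(m:ℝ) + 8*(6*(m:ℝ)+1)*0 + 2*(3*(m:ℝ)+5)*(0*0)) / (3*b*(4 + 2*0)))) :=
    hnum.div hden hden0
  have hpt : (48*(m:ℝ) + 8*(6*(m:ℝ)+1)*0 + 2*(3*(m:ℝ)+5)*(0*0)) / (3*b*(4 + 2*0)) =
      4 * (m : ℝ) / (3 * m + 1) := by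
    rw [hbdef]
    rw [div_eq_div_iff (by positivity) (by positivity)]
    ring
  rw [← hpt]
  apply hg.congr'
  rw [Filter.eventuallyEq_iff_exists_mem]
  refine ⟨{t | 1 ≤ t}, Filter.mem_atTop 1, fun t ht => ?_⟩
  have ht1 : 1 ≤ t := ht
  have ht0 : (0:ℝ) < t := by exact_mod_cast ht1
  have hx0 : (0:ℝ) < b^t := pow_pos hb0 t
  have hN : (Fintype.card (KochVertex m t) : ℝ) = 2*b^t + 1 := by
    rw [card_vertex]; push_cast; ring
  have hS : (∑ u : KochVertex m t, ∑ v : KochVertex m t, ((KochGraph m t).dist u v : ℝ)) =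
      Sd m t := rfl
  have hSd := Sd_cf (m := m) t
  have hinv : (1/b)^t = 1/(b^t) := by rw [div_pow, one_pow]
  rw [hgdef]
  simp only []
  rw [hS, hN]
  simp only [hinv]
  have hSval : Sd m t = (48*(m:ℝ)*(t:ℝ)*(b^t)^2 + 8*(6*(m:ℝ)+1)*(b^t)^2
      + 2*(3*(m:ℝ)+5)*(b^t)) / (3*b) := by
    rw [eq_div_iff (by positivity)]
    linear_combination hSd
  rw [hSval]
  have htne : (t:ℝ) ≠ 0 := ht0.ne'
  have hbtne : b^t ≠ 0 := hx0.ne'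
  have hbne : b ≠ 0 := hb0.ne'
  field_simp
  ring
end

section
/- For all integers m ≥ 1 and t ≥ 0 and any two distinct vertices u, v of the Koch network K_{m,t}, there is exactly one shortest path between u and v; i.e. the number of paths from u to v of length d(u,v) equals 1. -/
namespace KochAux
open SimpleGraph Walk

variable {m : ℕ}

lemma corner_inl (t : ℕ) (τ : KochTri m t) (i : Fin 3) :
    KochCorner m (t+1) (Sum.inl τ) i = Sum.inl (KochCorner m t τ i) := rfl

lemma corner_inr0 (t : ℕ) (τ : KochTri m t) (c : Fin 3) (g : Fin m) :
    KochCorner m (t+1) (Sum.inr (τ, c, g)) 0 = Sum.inl (KochCorner m t τ c) := rfl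

lemma corner_inr1 (t : ℕ) (τ : KochTri m t) (c : Fin 3) (g : Fin m) :
    KochCorner m (t+1) (Sum.inr (τ, c, g)) 1 = Sum.inr (τ, c, g, 0) := rfl

lemma corner_inr2 (t : ℕ) (τ : KochTri m t) (c : Fin 3) (g : Fin m) :
    KochCorner m (t+1) (Sum.inr (τ, c, g)) 2 = Sum.inr (τ, c, g, 1) := rfl

lemma fin2 (p : Fin 2) : p = 0 ∨ p = 1 := by fin_cases p <;> [left; right] <;> rfl

/-- The other member of a pair. -/
def op (p : Fin 2) : Fin 2 := if p = 0 then 1 else 0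

lemma op_ne (p : Fin 2) : op p ≠ p := by fin_cases p <;> decide

lemma eq_op_of_ne {p q : Fin 2} (h : q ≠ p) : q = op p := by
  fin_cases p <;> fin_cases q <;> simp_all [op]

lemma inr_inj {t : ℕ} {τ τ' : KochTri m t} {c c' : Fin 3} {g g' : Fin m} {p p' : Fin 2}
    (h : (Sum.inr (τ, c, g, p) : KochVertex m (t+1)) = Sum.inr (τ', c', g', p')) :
    τ = τ' ∧ c = c' ∧ g = g' ∧ p = p' := by
  injection h with h
  injection h with h1 h
  injection h with h2 h
  injection h with h3 h4
  exact ⟨h1, h2, h3, h4⟩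

lemma corner_inr_cases (t : ℕ) (τ : KochTri m t) (c : Fin 3) (g : Fin m) (i : Fin 3) :
    KochCorner m (t+1) (Sum.inr (τ, c, g)) i = Sum.inl (KochCorner m t τ c) ∨
      KochCorner m (t+1) (Sum.inr (τ, c, g)) i = Sum.inr (τ, c, g, 0) ∨
      KochCorner m (t+1) (Sum.inr (τ, c, g)) i = Sum.inr (τ, c, g, 1) := by
  match i with
  | 0 => exact Or.inl rfl
  | 1 => exact Or.inr (Or.inl rfl)
  | 2 => exact Or.inr (Or.inr rfl)

lemma adj_inl_inl {t : ℕ} {u v : KochVertex m t} :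
    (KochGraph m (t+1)).Adj (Sum.inl u) (Sum.inl v) ↔ (KochGraph m t).Adj u v := by
  constructor
  · rintro ⟨hne, T, i, j, hi, hj⟩
    rcases T with τ | ⟨τ, c, g⟩
    · exact ⟨fun h => hne (by rw [h]), τ, i, j, Sum.inl.inj hi, Sum.inl.inj hj⟩
    · rcases corner_inr_cases t τ c g i with h | h | h <;> rw [h] at hi <;>
        [skip; exact (Sum.inr_ne_inl hi).elim; exact (Sum.inr_ne_inl hi).elim]
      rcases corner_inr_cases t τ c g j with h' | h' | h' <;> rw [h'] at hj <;>
        [skip; exact (Sum.inr_ne_inl hj).elim; exact (Sum.inr_ne_inl hj).elim]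
      exact absurd (hi.symm.trans hj) hne
  · rintro ⟨hne, τ, i, j, hi, hj⟩
    exact ⟨fun h => hne (Sum.inl.inj h), Sum.inl τ, i, j, by rw [corner_inl, hi],
      by rw [corner_inl, hj]⟩

lemma adj_inr {t : ℕ} {τ : KochTri m t} {c : Fin 3} {g : Fin m} {p : Fin 2}
    {b : KochVertex m (t+1)} :
    (KochGraph m (t+1)).Adj (Sum.inr (τ, c, g, p)) b ↔
      b = Sum.inl (KochCorner m t τ c) ∨ b = Sum.inr (τ, c, g, op p) := by
  constructor
  · rintro ⟨hne, T, i, j, hi, hj⟩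
    rcases T with τ' | ⟨τ', c', g'⟩
    · rw [corner_inl] at hi; exact (Sum.inl_ne_inr hi).elim
    · rcases corner_inr_cases t τ' c' g' i with h | h | h <;> rw [h] at hi
      · exact (Sum.inl_ne_inr hi).elim
      all_goals {
        obtain ⟨rfl, rfl, rfl, rfl⟩ := inr_inj hi
        rcases corner_inr_cases t τ' c' g' j with h' | h' | h' <;> rw [h'] at hj
        · exact Or.inl hj.symm
        · first
            | exact absurd hj hne
            | exact Or.inr hj.symm
        · first
            | exact absurd hj hne
            | exact Or.inr hj.symm }
  · rintro (rfl | rfl)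
    · rcases fin2 p with rfl | rfl
      · exact ⟨fun h => Sum.inr_ne_inl h, Sum.inr (τ, c, g), 1, 0, rfl, rfl⟩
      · exact ⟨fun h => Sum.inr_ne_inl h, Sum.inr (τ, c, g), 2, 0, rfl, rfl⟩
    · have hne : (Sum.inr (τ, c, g, p) : KochVertex m (t+1)) ≠ Sum.inr (τ, c, g, op p) :=
        fun h => op_ne p ((inr_inj h).2.2.2).symm
      rcases fin2 p with rfl | rfl
      · exact ⟨hne, Sum.inr (τ, c, g), 1, 2, rfl, rfl⟩
      · exact ⟨hne, Sum.inr (τ, c, g), 2, 1, rfl, rfl⟩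
/-- Project a vertex of `K_{m,t+1}` to `K_{m,t}` (new vertices go to their father). -/
def proj0 (t : ℕ) : KochVertex m (t+1) → KochVertex m t
  | Sum.inl v => v
  | Sum.inr (τ, c, _, _) => KochCorner m t τ c

/-- Height: 0 for old vertices, 1 for new ones. -/
def hgt (t : ℕ) : KochVertex m (t+1) → ℕ
  | Sum.inl _ => 0
  | Sum.inr _ => 1

lemma hgt_le_one (t : ℕ) (a : KochVertex m (t+1)) : hgt t a ≤ 1 := by
  rcases a with a | a <;> simp [hgt]

lemma adj_father {t : ℕ} (τ : KochTri m t) (c : Fin 3) (g : Fin m) (p : Fin 2) :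
    (KochGraph m (t+1)).Adj (Sum.inr (τ, c, g, p)) (Sum.inl (KochCorner m t τ c)) :=
  adj_inr.mpr (Or.inl rfl)

/-- Every neighbour of a new vertex projects to the same vertex. -/
lemma proj0_eq_of_adj_new {t : ℕ} {τ : KochTri m t} {c : Fin 3} {g : Fin m} {p : Fin 2}
    {b : KochVertex m (t+1)} (h : (KochGraph m (t+1)).Adj (Sum.inr (τ, c, g, p)) b) :
    proj0 t b = KochCorner m t τ c := by
  rcases adj_inr.mp h with rfl | rfl <;> rfl

lemma adj_proj {t : ℕ} {a b : KochVertex m (t+1)} (h : (KochGraph m (t+1)).Adj a b) :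
    proj0 t a = proj0 t b ∨ (KochGraph m t).Adj (proj0 t a) (proj0 t b) := by
  rcases a with a | ⟨τ, c, g, p⟩
  · rcases b with b | ⟨τ', c', g', p'⟩
    · exact Or.inr (adj_inl_inl.mp h)
    · exact Or.inl (proj0_eq_of_adj_new h.symm)
  · exact Or.inl (proj0_eq_of_adj_new h).symm

/-- The inclusion homomorphism. -/
def incl (t : ℕ) : KochGraph m t →g KochGraph m (t+1) where
  toFun := Sum.inl
  map_rel' := fun h => adj_inl_inl.mpr h

lemma incl_inj (t : ℕ) : Function.Injective (incl (m := m) t) := fun _ _ h => Sum.inl.inj h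

lemma koch_reachable : ∀ (t : ℕ) (u v : KochVertex m t), (KochGraph m t).Reachable u v := by
  intro t
  induction t with
  | zero =>
    intro u v
    by_cases huv : u = v
    · exact huv ▸ SimpleGraph.Reachable.refl u
    · exact SimpleGraph.Adj.reachable ⟨huv, (), u, v, rfl, rfl⟩
  | succ t ih =>
    have key : ∀ a : KochVertex m (t+1), (KochGraph m (t+1)).Reachable a (Sum.inl (proj0 t a)) := by
      intro a
      rcases a with a | ⟨τ, c, g, p⟩
      · exact SimpleGraph.Reachable.refl _
      · exact (adj_father τ c g p).reachable
    intro a b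
    exact ((key a).trans ((ih (proj0 t a) (proj0 t b)).map (incl t))).trans (key b).symm

lemma koch_nonempty : ∀ t : ℕ, Nonempty (KochVertex m t)
  | 0 => ⟨(0 : Fin 3)⟩
  | t+1 => ⟨Sum.inl (koch_nonempty t).some⟩

lemma koch_connected (t : ℕ) : (KochGraph m t).Connected := by
  have := koch_nonempty (m := m) t
  exact ⟨fun u v => koch_reachable t u v⟩
/-- Project a walk of `K_{m,t+1}` to a walk of `K_{m,t}`, collapsing steps within a new group. -/
def projW {t : ℕ} : ∀ {a b : KochVertex m (t+1)}, (KochGraph m (t+1)).Walk a b →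
    (KochGraph m t).Walk (proj0 t a) (proj0 t b)
  | _, _, SimpleGraph.Walk.nil => SimpleGraph.Walk.nil
  | a, _, SimpleGraph.Walk.cons (v := x) h q =>
    if heq : proj0 t a = proj0 t x then (projW q).copy heq.symm rfl
    else SimpleGraph.Walk.cons ((adj_proj h).resolve_left heq) (projW q)

lemma projW_length_le {t : ℕ} : ∀ {a b : KochVertex m (t+1)}
    (p : (KochGraph m (t+1)).Walk a b), (projW p).length ≤ p.length := by
  intro a b p
  induction p with
  | nil => simp [projW]
  | cons h q ih =>
    rw [projW]
    split
    · simpa using Nat.le_succ_of_le ih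
    · simpa using ih

lemma lb_end {t : ℕ} : ∀ {a b : KochVertex m (t+1)} (p : (KochGraph m (t+1)).Walk a b),
    a ≠ b → hgt t b + (projW p).length ≤ p.length := by
  intro a b p
  induction p with
  | nil => exact fun h => absurd rfl h
  | @cons a x b h q ih =>
    intro _
    rw [projW]
    split
    · -- collapsed step
      rw [Walk.length_copy, Walk.length_cons]
      by_cases hxb : x = b
      · have h1 := projW_length_le q
        have h2 := hgt_le_one t b
        omega
      · have := ih hxb
        omega
    · -- non-collapsed step
      rename_i heq
      rw [Walk.length_cons, Walk.length_cons]
      by_cases hxb : x = b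
      · have hb : hgt t x = 0 := by
          rcases x with w | ⟨τ, c, g, p'⟩
          · rfl
          · exact absurd (proj0_eq_of_adj_new h.symm) heq
        have h1 := projW_length_le q
        rw [hxb] at hb
        omega
      · have := ih hxb
        omega

lemma lb_both {t : ℕ} : ∀ {a b : KochVertex m (t+1)} (p : (KochGraph m (t+1)).Walk a b),
    proj0 t a ≠ proj0 t b → hgt t a + hgt t b + (projW p).length ≤ p.length := by
  intro a b p hab
  rcases a with w | ⟨τ, c, g, pp⟩
  · have h0 : hgt t (Sum.inl w) = 0 := rfl
    rw [h0, Nat.zero_add]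
    exact lb_end p (fun h => hab (by rw [h]))
  · cases p with
    | nil => exact absurd rfl hab
    | @cons _ x _ h q =>
      have hcol : proj0 t x = KochCorner m t τ c := proj0_eq_of_adj_new h
      have hx : proj0 t x ≠ proj0 t b := by rw [hcol]; exact hab
      erw [projW, dif_pos (show proj0 t (Sum.inr (τ, c, g, pp)) = proj0 t x from hcol.symm),
        Walk.length_copy, Walk.length_cons]
      have h1 := lb_end q (fun h => hx (by rw [h]))
      have h2 : hgt t (Sum.inr (τ, c, g, pp)) = 1 := rfl
      omega
lemma dist_succ {t : ℕ} {a b : KochVertex m (t+1)} (h : proj0 t a ≠ proj0 t b) :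
    (KochGraph m (t+1)).dist a b =
      (KochGraph m t).dist (proj0 t a) (proj0 t b) + hgt t a + hgt t b := by
  apply le_antisymm
  · obtain ⟨q, hq⟩ := (koch_reachable t (proj0 t a) (proj0 t b)).exists_walk_length_eq_dist
    rcases a with w | ⟨τ, c, g, p⟩ <;> rcases b with w' | ⟨τ', c', g', p'⟩
    · have := SimpleGraph.dist_le (q.map (incl t))
      rw [Walk.length_map, hq] at this
      exact this
    · have := SimpleGraph.dist_le ((q.map (incl t)).concat (adj_father τ' c' g' p').symm)
      erw [Walk.length_concat, Walk.length_map, hq] at this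
      exact this
    · have := SimpleGraph.dist_le (Walk.cons (adj_father τ c g p) (q.map (incl t)))
      erw [Walk.length_cons, Walk.length_map, hq] at this
      exact this
    · have := SimpleGraph.dist_le
        (Walk.cons (adj_father τ c g p) ((q.map (incl t)).concat (adj_father τ' c' g' p').symm))
      erw [Walk.length_cons, Walk.length_concat, Walk.length_map, hq] at this
      simpa [hgt] using this
  · obtain ⟨p, hp⟩ := (koch_reachable (t+1) a b).exists_walk_length_eq_dist
    have h1 := lb_both p h
    have h2 := SimpleGraph.dist_le (projW p)
    omega

section general
variable {V : Type*} {G : SimpleGraph V} {u v : V}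

/-- "Unique shortest path" predicate. -/
def US (G : SimpleGraph V) (u v : V) : Prop :=
  ∃! p : G.Walk u v, p.IsPath ∧ p.length = G.dist u v

lemma eq_cons_nil_of_length_one :
    ∀ (p : G.Walk u v), p.length = 1 → ∃ (h : G.Adj u v), p = Walk.cons h Walk.nil := by
  intro p hl
  cases p with
  | nil => simp at hl
  | cons h q =>
    cases q with
    | nil => exact ⟨h, rfl⟩
    | cons h' q' =>
      rw [Walk.length_cons, Walk.length_cons] at hl
      omega

lemma US_of_adj (h : G.Adj u v) : US G u v := by
  have hd : G.dist u v = 1 := SimpleGraph.dist_eq_one_iff_adj.mpr h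
  refine ⟨Walk.cons h Walk.nil, ⟨by simp [h.ne], by simp [hd]⟩, ?_⟩
  rintro q ⟨hq, hql⟩
  obtain ⟨h', rfl⟩ := eq_cons_nil_of_length_one q (by rw [hql, hd])
  rfl

lemma US_of_two (hd : G.dist u v = 2) {x : V} (hux : G.Adj u x) (hxv : G.Adj x v)
    (huv : u ≠ v) (hmid : ∀ y, G.Adj u y → G.Adj y v → y = x) : US G u v := by
  refine ⟨Walk.cons hux (Walk.cons hxv Walk.nil), ⟨by simp [hux.ne, hxv.ne, huv], by simp [hd]⟩, ?_⟩
  rintro q ⟨hq, hql⟩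
  rw [hd] at hql
  cases q with
  | nil => simp at hql
  | @cons _ y _ h1 q1 =>
    cases q1 with
    | nil => rw [Walk.length_cons, Walk.length_nil] at hql; omega
    | @cons _ z _ h2 q2 =>
      cases q2 with
      | nil =>
        cases hmid y h1 h2
        rfl
      | cons h3 q3 =>
        rw [Walk.length_cons, Walk.length_cons, Walk.length_cons] at hql
        omega

lemma US_symm (h : US G u v) : US G v u := by
  obtain ⟨p, ⟨hp, hpl⟩, hun⟩ := h
  refine ⟨p.reverse, ⟨hp.reverse, by rw [Walk.length_reverse, hpl, SimpleGraph.dist_comm]⟩, ?_⟩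
  rintro q ⟨hq, hql⟩
  have hq' := hun q.reverse ⟨hq.reverse, by rw [Walk.length_reverse, hql, SimpleGraph.dist_comm]⟩
  rw [← Walk.reverse_reverse q, hq']

end general
lemma unmap {t : ℕ} : ∀ (n : ℕ) {u v : KochVertex m t}
    (p : (KochGraph m (t+1)).Walk (Sum.inl u) (Sum.inl v)), p.length = n →
    (∀ x ∈ p.support, ∃ y, x = Sum.inl y) →
    ∃ q : (KochGraph m t).Walk u v, p = q.map (incl t) := by
  intro n
  induction n with
  | zero =>
    intro u v p hl hs
    cases p with
    | nil => exact ⟨Walk.nil, rfl⟩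
    | cons h q => erw [Walk.length_cons] at hl; omega
  | succ n ih =>
    intro u v p hl hs
    cases p with
    | nil => erw [Walk.length_nil] at hl; omega
    | @cons _ x _ h q =>
      obtain ⟨y, rfl⟩ := hs x (List.mem_cons_of_mem _ q.start_mem_support)
      obtain ⟨q', rfl⟩ := ih q (by erw [Walk.length_cons] at hl; omega)
        (fun z hz => hs z (List.mem_cons_of_mem _ hz))
      exact ⟨Walk.cons (adj_inl_inl.mp h) q', rfl⟩

lemma support_old {t : ℕ} {u v : KochVertex m t} (hne : u ≠ v)
    (p : (KochGraph m (t+1)).Walk (Sum.inl u) (Sum.inl v))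
    (hl : p.length = (KochGraph m (t+1)).dist (Sum.inl u) (Sum.inl v)) :
    ∀ x ∈ p.support, ∃ y, x = Sum.inl y := by
  intro x hx
  rcases x with y | ⟨τ, c, g, pp⟩
  · exact ⟨y, rfl⟩
  exfalso
  set x : KochVertex m (t+1) := Sum.inr (τ, c, g, pp) with hxdef
  have hsplit : (KochGraph m (t+1)).dist (Sum.inl u) x + (KochGraph m (t+1)).dist x (Sum.inl v)
      ≤ p.length := by
    calc (KochGraph m (t+1)).dist (Sum.inl u) x + (KochGraph m (t+1)).dist x (Sum.inl v)
        ≤ (p.takeUntil x hx).length + (p.dropUntil x hx).length :=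
          Nat.add_le_add (SimpleGraph.dist_le _) (SimpleGraph.dist_le _)
      _ = p.length := by erw [← Walk.length_append, Walk.take_spec]
  have hdist : (KochGraph m (t+1)).dist (Sum.inl u) (Sum.inl v) = (KochGraph m t).dist u v := by
    have := dist_succ (t := t) (a := Sum.inl u) (b := Sum.inl v) hne
    exact this
  by_cases hz1 : KochCorner m t τ c = u
  · have e2 : (KochGraph m (t+1)).dist x (Sum.inl v) =
        (KochGraph m t).dist (KochCorner m t τ c) v + 1 := by
      have := dist_succ (t := t) (a := x) (b := Sum.inl v)
        (show KochCorner m t τ c ≠ v from hz1 ▸ hne)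
      exact this
    have e1 : 0 < (KochGraph m (t+1)).dist (Sum.inl u) x :=
      (koch_reachable (t+1) _ _).pos_dist_of_ne (fun hh => Sum.inl_ne_inr hh)
    rw [hz1] at e2
    omega
  · have e1 : (KochGraph m (t+1)).dist (Sum.inl u) x =
        (KochGraph m t).dist u (KochCorner m t τ c) + 1 := by
      have := dist_succ (t := t) (a := Sum.inl u) (b := x)
        (show u ≠ KochCorner m t τ c from fun hh => hz1 hh.symm)
      exact this
    by_cases hz2 : KochCorner m t τ c = v
    · have e2 : 0 < (KochGraph m (t+1)).dist x (Sum.inl v) :=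
        (koch_reachable (t+1) _ _).pos_dist_of_ne (fun hh => Sum.inr_ne_inl hh)
      rw [hz2] at e1
      omega
    · have e2 : (KochGraph m (t+1)).dist x (Sum.inl v) =
        (KochGraph m t).dist (KochCorner m t τ c) v + 1 := by
        have := dist_succ (t := t) (a := x) (b := Sum.inl v)
          (show KochCorner m t τ c ≠ v from hz2)
        exact this
      have htri := (koch_connected (m := m) t).dist_triangle
        (u := u) (v := KochCorner m t τ c) (w := v)
      omega

lemma US_old {t : ℕ} {u v : KochVertex m t} (hne : u ≠ v) (h : US (KochGraph m t) u v) :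
    US (KochGraph m (t+1)) (Sum.inl u) (Sum.inl v) := by
  obtain ⟨q, ⟨hq, hql⟩, hun⟩ := h
  have hdist : (KochGraph m (t+1)).dist (Sum.inl u) (Sum.inl v) = (KochGraph m t).dist u v := by
    have := dist_succ (t := t) (a := Sum.inl u) (b := Sum.inl v) hne
    exact this
  refine ⟨q.map (incl t), ⟨Walk.map_isPath_of_injective (incl_inj t) hq,
    by erw [Walk.length_map, hql, hdist]⟩, ?_⟩
  rintro p ⟨hp, hpl⟩
  obtain ⟨q', rfl⟩ := unmap p.length p rfl (support_old hne p hpl)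
  have hq' : q'.IsPath := hp.of_map
  have hl' : q'.length = (KochGraph m t).dist u v := by
    have := Walk.length_map (p := q') (f := incl t)
    exact this.symm.trans (hpl.trans hdist)
  rw [hun q' ⟨hq', hl'⟩]
lemma peel {t : ℕ} {τ : KochTri m t} {c : Fin 3} {g : Fin m} {p : Fin 2}
    {b : KochVertex m (t+1)} (hne : KochCorner m t τ c ≠ proj0 t b)
    (hUS : US (KochGraph m (t+1)) (Sum.inl (KochCorner m t τ c)) b) :
    US (KochGraph m (t+1)) (Sum.inr (τ, c, g, p)) b := by
  have haf : (KochGraph m (t+1)).Adj (Sum.inr (τ, c, g, p)) (Sum.inl (KochCorner m t τ c)) :=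
    adj_father τ c g p
  have hd_a : (KochGraph m (t+1)).dist (Sum.inr (τ, c, g, p)) b =
      (KochGraph m t).dist (KochCorner m t τ c) (proj0 t b) + 1 + hgt t b := by
    have := dist_succ (t := t) (a := Sum.inr (τ, c, g, p)) (b := b) hne
    exact this
  have hd_f : (KochGraph m (t+1)).dist (Sum.inl (KochCorner m t τ c)) b =
      (KochGraph m t).dist (KochCorner m t τ c) (proj0 t b) + hgt t b := by
    have := dist_succ (t := t) (a := Sum.inl (KochCorner m t τ c)) (b := b) hne
    exact this
  obtain ⟨q, ⟨hq, hql⟩, hun⟩ := hUS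
  have hnotmem : Sum.inr (τ, c, g, p) ∉ q.support := by
    intro hmem
    have h1 : (KochGraph m (t+1)).dist (Sum.inl (KochCorner m t τ c)) (Sum.inr (τ, c, g, p)) +
        (KochGraph m (t+1)).dist (Sum.inr (τ, c, g, p)) b ≤ q.length := by
      calc _ ≤ (q.takeUntil _ hmem).length + (q.dropUntil _ hmem).length :=
            Nat.add_le_add (SimpleGraph.dist_le _) (SimpleGraph.dist_le _)
        _ = q.length := by erw [← Walk.length_append, Walk.take_spec]
    have h2 : 0 < (KochGraph m (t+1)).dist (Sum.inl (KochCorner m t τ c)) (Sum.inr (τ, c, g, p)) :=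
      (koch_reachable (t+1) _ _).pos_dist_of_ne (fun hh => Sum.inl_ne_inr hh)
    omega
  refine ⟨Walk.cons haf q, ⟨by erw [Walk.cons_isPath_iff]; exact ⟨hq, hnotmem⟩,
    by erw [Walk.length_cons, hql]; omega⟩, ?_⟩
  rintro r ⟨hr, hrl⟩
  cases r with
  | nil => exact absurd rfl hne
  | @cons _ x _ h1 r1 =>
    rcases adj_inr.mp h1 with rfl | rfl
    · have hr1 : r1.IsPath := by
        erw [SimpleGraph.Walk.cons_isPath_iff] at hr
        exact hr.1
      have hr1l : r1.length = (KochGraph m (t+1)).dist (Sum.inl (KochCorner m t τ c)) b := by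
        replace hrl : r1.length + 1 = (KochGraph m (t+1)).dist (Sum.inr (τ, c, g, p)) b := hrl
        omega
      rw [hun r1 ⟨hr1, hr1l⟩]; rfl
    · exfalso
      have hds : (KochGraph m (t+1)).dist (Sum.inr (τ, c, g, op p)) b =
          (KochGraph m t).dist (KochCorner m t τ c) (proj0 t b) + 1 + hgt t b := by
        have := dist_succ (t := t) (a := Sum.inr (τ, c, g, op p)) (b := b) hne
        exact this
      have hlow : (KochGraph m (t+1)).dist (Sum.inr (τ, c, g, op p)) b ≤ r1.length := SimpleGraph.dist_le r1
      replace hrl : r1.length + 1 = (KochGraph m (t+1)).dist (Sum.inr (τ, c, g, p)) b := hrl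
      omega

lemma US_succ {t : ℕ} (IH : ∀ u v : KochVertex m t, u ≠ v → US (KochGraph m t) u v) :
    ∀ a b : KochVertex m (t+1), a ≠ b → US (KochGraph m (t+1)) a b := by
  intro a b hab
  by_cases hpp : proj0 t a = proj0 t b
  · rcases a with w | ⟨τ, c, g, p⟩ <;> rcases b with w' | ⟨τ', c', g', p'⟩
    · exact absurd (congrArg Sum.inl (hpp : w = w')) hab
    · have hw : w = KochCorner m t τ' c' := hpp
      subst hw
      exact US_of_adj (adj_father τ' c' g' p').symm
    · have hw : KochCorner m t τ c = w' := hpp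
      subst hw
      exact US_of_adj (adj_father τ c g p)
    · by_cases hgrp : τ = τ' ∧ c = c' ∧ g = g'
      · obtain ⟨rfl, rfl, rfl⟩ := hgrp
        have hp' : p' = op p := eq_op_of_ne (fun h => hab (by rw [h]))
        subst hp'
        exact US_of_adj (adj_inr.mpr (Or.inr rfl))
      · have hcc : KochCorner m t τ c = KochCorner m t τ' c' := hpp
        have hnadj : ¬ (KochGraph m (t+1)).Adj (Sum.inr (τ, c, g, p)) (Sum.inr (τ', c', g', p')) := by
          intro hadj
          rcases adj_inr.mp hadj with hh | hh
          · exact Sum.inr_ne_inl hh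
          · obtain ⟨rfl, rfl, rfl, -⟩ := inr_inj hh
            exact hgrp ⟨rfl, rfl, rfl⟩
        have hd2 : (KochGraph m (t+1)).dist (Sum.inr (τ, c, g, p)) (Sum.inr (τ', c', g', p')) = 2 := by
          apply le_antisymm
          · have := SimpleGraph.dist_le (Walk.cons (adj_father τ c g p)
              (Walk.cons (hcc ▸ (adj_father τ' c' g' p').symm) Walk.nil))
            exact this
          · have hne0 : (KochGraph m (t+1)).dist (Sum.inr (τ, c, g, p)) (Sum.inr (τ', c', g', p')) ≠ 0 := by
              have := (koch_reachable (t+1) (Sum.inr (τ, c, g, p))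
                (Sum.inr (τ', c', g', p'))).pos_dist_of_ne hab
              omega
            have hne1 : (KochGraph m (t+1)).dist (Sum.inr (τ, c, g, p)) (Sum.inr (τ', c', g', p')) ≠ 1 := by
              intro hh
              exact hnadj (SimpleGraph.dist_eq_one_iff_adj.mp hh)
            omega
        refine US_of_two hd2 (adj_father τ c g p) (hcc ▸ (adj_father τ' c' g' p').symm) hab ?_
        intro y hy1 hy2
        rcases adj_inr.mp hy1 with rfl | rfl
        · rfl
        · exfalso
          rcases adj_inr.mp hy2 with hh | hh
          · exact Sum.inr_ne_inl hh
          · obtain ⟨rfl, rfl, rfl, -⟩ := inr_inj hh.symm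
            exact hgrp ⟨rfl, rfl, rfl⟩
  · rcases a with w | ⟨τ, c, g, p⟩ <;> rcases b with w' | ⟨τ', c', g', p'⟩
    · exact US_old hpp (IH _ _ hpp)
    · have hne' : KochCorner m t τ' c' ≠ w := fun h => hpp h.symm
      exact US_symm (peel hne' (US_old hne' (IH _ _ hne')))
    · exact peel hpp (US_old hpp (IH _ _ hpp))
    · have hne' : KochCorner m t τ' c' ≠ KochCorner m t τ c := fun h => hpp h.symm
      exact peel hpp (US_symm (peel hne' (US_old hne' (IH _ _ hne'))))

lemma US_all : ∀ (t : ℕ) (u v : KochVertex m t), u ≠ v → US (KochGraph m t) u v := by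
  intro t
  induction t with
  | zero => exact fun u v h => US_of_adj ⟨h, (), u, v, rfl, rfl⟩
  | succ t ih => exact US_succ ih

end KochAux

/-- For all integers m ≥ 1 and t ≥ 0 and any two distinct vertices u, v of the
Koch network `K_{m,t}`, there is exactly one path between u and v of length `d(u,v)`. -/
theorem koch_unique_shortest_path (m t : ℕ) (hm : 1 ≤ m)
    (u v : KochVertex m t) (huv : u ≠ v) :
    ∃! p : (KochGraph m t).Walk u v, p.IsPath ∧ p.length = (KochGraph m t).dist u v := by
  exact KochAux.US_all t u v huv
end

section
/- For all integers m ≥ 1 and t ≥ 1, every vertex v of the Koch network K_{m,t} that is not an initial vertex has exactly one neighbor of degree strictly greater than the degree of v (its father vertex, added at an earlier step), and every other neighbor of v apart from this father and the unique equal-degree neighbor has degree strictly smaller than the degree of v (these are the vertices attached to v at later steps). -/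
namespace Koch
variable {m : ℕ}

lemma vinj {t : ℕ} {a b : KochTri m t × Fin 3 × Fin m × Fin 2}
    (h : (Sum.inr a : KochVertex m (t+1)) = Sum.inr b) : a = b := Sum.inr.inj h

lemma vninj {t : ℕ} {a : KochVertex m t} {b : KochTri m t × Fin 3 × Fin m × Fin 2}
    (h : (Sum.inl a : KochVertex m (t+1)) = Sum.inr b) : False := Sum.inl_ne_inr h

lemma vlinj {t : ℕ} {a b : KochVertex m t}
    (h : (Sum.inl a : KochVertex m (t+1)) = Sum.inl b) : a = b := Sum.inl.inj h

lemma corner_inr {t : ℕ} (τ : KochTri m t) (c : Fin 3) (g : Fin m) (i : Fin 3) :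
    KochCorner m (t+1) (Sum.inr (τ, c, g)) i =
      if i = 0 then Sum.inl (KochCorner m t τ c) else Sum.inr (τ, c, g, if i = 1 then 0 else 1) := by
  fin_cases i <;> simp [KochCorner] <;> rfl

lemma corner_inj : ∀ t (τ : KochTri m t), Function.Injective (KochCorner m t τ)
  | 0, τ => fun i j h => h
  | t+1, Sum.inl τ => fun i j h => by
      simp only [KochCorner] at h
      exact corner_inj t τ (Sum.inl.inj h)
  | t+1, Sum.inr (τ, c, g) => fun i j h => by
      fin_cases i <;> fin_cases j <;> simp_all [KochCorner] <;>
        · first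
            | (have h2 : (0 : Fin 2) = 1 := congrArg (fun x => x.2.2.2) (vinj h)
               exact absurd h2 (by decide))
            | (have h2 : (1 : Fin 2) = 0 := congrArg (fun x => x.2.2.2) (vinj h)
               exact absurd h2 (by decide))

lemma shared : ∀ t (τ τ' : KochTri m t) (i j i' j' : Fin 3), i ≠ j →
    KochCorner m t τ i = KochCorner m t τ' i' →
    KochCorner m t τ j = KochCorner m t τ' j' → τ = τ'
  | 0, τ, τ', _, _, _, _, _, _, _ => rfl
  | t+1, Sum.inl τ, Sum.inl τ', i, j, i', j', hij, h1, h2 => by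
      simp only [KochCorner] at h1 h2
      exact congrArg Sum.inl (shared t τ τ' i j i' j' hij (vlinj h1) (vlinj h2))
  | t+1, Sum.inl τ, Sum.inr (σ, c, g), i, j, i', j', hij, h1, h2 => by
      exfalso
      rw [corner_inr] at h1; rw [corner_inr] at h2
      simp only [KochCorner] at h1 h2
      have hi' : i' = 0 := by by_contra hne; rw [if_neg hne] at h1; exact vninj h1
      have hj' : j' = 0 := by by_contra hne; rw [if_neg hne] at h2; exact vninj h2
      rw [hi', if_pos rfl] at h1; rw [hj', if_pos rfl] at h2
      exact hij (corner_inj _ _ (vlinj (h1.trans h2.symm)))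
  | t+1, Sum.inr (σ, c, g), Sum.inl τ, i, j, i', j', hij, h1, h2 => by
      exfalso
      rw [corner_inr] at h1; rw [corner_inr] at h2
      simp only [KochCorner] at h1 h2
      have hi : i = 0 := by by_contra hne; rw [if_neg hne] at h1; exact vninj h1.symm
      have hj : j = 0 := by by_contra hne; rw [if_neg hne] at h2; exact vninj h2.symm
      exact hij (hi.trans hj.symm)
  | t+1, Sum.inr (σ, c, g), Sum.inr (σ', c', g'), i, j, i', j', hij, h1, h2 => by
      have key : ∀ (k k' : Fin 3), k ≠ 0 →
          KochCorner m (t+1) (Sum.inr (σ, c, g)) k =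
            KochCorner m (t+1) (Sum.inr (σ', c', g')) k' →
          (Sum.inr (σ, c, g) : KochTri m (t+1)) = Sum.inr (σ', c', g') := by
        intro k k' hk h
        rw [corner_inr, corner_inr, if_neg hk] at h
        by_cases hk' : k' = 0
        · rw [if_pos hk'] at h; exact absurd h.symm vninj
        · rw [if_neg hk'] at h
          have h' := vinj h
          simp only [Prod.ext_iff] at h'
          obtain ⟨rfl, rfl, rfl, -⟩ := h'
          rfl
      rcases eq_or_ne i 0 with hi | hi
      · exact key j j' (fun h => hij (hi.trans h.symm)) h2
      · exact key i i' hi h1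

lemma corner_inl {t : ℕ} (τ : KochTri m t) (i : Fin 3) :
    KochCorner m (t+1) (Sum.inl τ) i = Sum.inl (KochCorner m t τ i) := rfl

lemma corner_eq_inl {t : ℕ} {τ : KochTri m t} {c : Fin 3} {g : Fin m} {i : Fin 3}
    {a : KochVertex m t} (h : KochCorner m (t+1) (Sum.inr (τ, c, g)) i = Sum.inl a) :
    i = 0 ∧ KochCorner m t τ c = a := by
  rw [corner_inr] at h
  by_cases hi : i = 0
  · rw [if_pos hi] at h; exact ⟨hi, vlinj h⟩
  · rw [if_neg hi] at h; exact absurd h.symm vninj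

lemma corner_eq_inr {t : ℕ} {τ : KochTri m t} {c : Fin 3} {g : Fin m} {i : Fin 3}
    {b : KochTri m t × Fin 3 × Fin m × Fin 2}
    (h : KochCorner m (t+1) (Sum.inr (τ, c, g)) i = Sum.inr b) :
    i ≠ 0 ∧ b = (τ, c, g, if i = 1 then 0 else 1) := by
  rw [corner_inr] at h
  by_cases hi : i = 0
  · rw [if_pos hi] at h; exact absurd h vninj
  · rw [if_neg hi] at h; exact ⟨hi, (vinj h).symm⟩

lemma adj_inl_inl {t : ℕ} {a b : KochVertex m t} :
    (KochGraph m (t+1)).Adj (Sum.inl a) (Sum.inl b) ↔ (KochGraph m t).Adj a b := by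
  constructor
  · rintro ⟨hne, τ, i, j, hi, hj⟩
    rcases τ with τ | ⟨σ, c, g⟩
    · exact ⟨fun h => hne (congrArg Sum.inl h), τ, i, j, vlinj hi, vlinj hj⟩
    · obtain ⟨-, ha⟩ := corner_eq_inl hi
      obtain ⟨-, hb⟩ := corner_eq_inl hj
      exact absurd (congrArg Sum.inl (ha.symm.trans hb)) hne
  · rintro ⟨hne, τ, i, j, hi, hj⟩
    exact ⟨fun h => hne (vlinj h), Sum.inl τ, i, j,
      congrArg Sum.inl hi, congrArg Sum.inl hj⟩

lemma adj_inl_inr {t : ℕ} {a : KochVertex m t} {τ : KochTri m t} {c : Fin 3} {g : Fin m}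
    {p : Fin 2} :
    (KochGraph m (t+1)).Adj (Sum.inl a) (Sum.inr (τ, c, g, p)) ↔ KochCorner m t τ c = a := by
  constructor
  · rintro ⟨hne, σ, i, j, hi, hj⟩
    rcases σ with σ | ⟨σ, c', g'⟩
    · exact absurd hj vninj
    · obtain ⟨-, hb⟩ := corner_eq_inr hj
      obtain ⟨-, ha⟩ := corner_eq_inl hi
      have hb' : σ = τ ∧ c' = c ∧ g' = g := by
        have := hb.symm
        simp only [Prod.ext_iff] at this
        exact ⟨this.1, this.2.1, this.2.2.1⟩
      obtain ⟨rfl, rfl, rfl⟩ := hb'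
      exact ha
  · intro h
    refine ⟨fun hh => vninj hh, Sum.inr (τ, c, g), 0, if p = 0 then 1 else 2, ?_, ?_⟩
    · rw [corner_inr, if_pos rfl, h]
    · rw [corner_inr]
      fin_cases p <;> simp <;> rfl

lemma adj_inr_inr {t : ℕ} {τ τ' : KochTri m t} {c c' : Fin 3} {g g' : Fin m} {p p' : Fin 2} :
    (KochGraph m (t+1)).Adj (Sum.inr (τ, c, g, p)) (Sum.inr (τ', c', g', p')) ↔
      τ = τ' ∧ c = c' ∧ g = g' ∧ p ≠ p' := by
  constructor
  · rintro ⟨hne, σ, i, j, hi, hj⟩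
    rcases σ with σ | ⟨σ, c₀, g₀⟩
    · exact absurd hi vninj
    · obtain ⟨-, hb⟩ := corner_eq_inr hi
      obtain ⟨-, hb'⟩ := corner_eq_inr hj
      simp only [Prod.ext_iff] at hb hb'
      obtain ⟨rfl, rfl, rfl, -⟩ := hb
      obtain ⟨rfl, rfl, rfl, -⟩ := hb'
      refine ⟨rfl, rfl, rfl, fun hp => hne ?_⟩
      rw [hp]
  · rintro ⟨rfl, rfl, rfl, hp⟩
    refine ⟨fun hh => hp (congrArg (fun x => x.2.2.2) (vinj hh)), Sum.inr (τ, c, g),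
      if p = 0 then 1 else 2, if p' = 0 then 1 else 2, ?_, ?_⟩ <;>
      · rw [corner_inr]
        fin_cases p <;> fin_cases p' <;> simp_all <;> rfl

lemma birth_le : ∀ t (v : KochVertex m t), KochBirth m t v ≤ t
  | 0, _ => le_refl 0
  | t+1, Sum.inl v => le_trans (birth_le t v) (Nat.le_succ t)
  | t+1, Sum.inr _ => le_refl (t+1)

lemma birth_sibling : ∀ t (v : KochVertex m t),
    KochBirth m t (KochSibling m t v) = KochBirth m t v
  | 0, _ => rfl
  | t+1, Sum.inl v => by simp only [KochSibling, KochBirth]; exact birth_sibling t v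
  | t+1, Sum.inr _ => rfl

lemma birth_father_lt : ∀ t (v : KochVertex m t), KochBirth m t v ≠ 0 →
    KochBirth m t (KochFather m t v) < KochBirth m t v
  | 0, v, hv => absurd rfl hv
  | t+1, Sum.inl v, hv => birth_father_lt t v hv
  | t+1, Sum.inr (τ, c, g, p), _ => by
      simpa only [KochFather, KochBirth] using Nat.lt_succ_of_le (birth_le t (KochCorner m t τ c))

lemma sibling_ne : ∀ t (v : KochVertex m t), KochBirth m t v ≠ 0 → KochSibling m t v ≠ v
  | 0, v, hv => absurd rfl hv
  | t+1, Sum.inl v, hv => fun h => sibling_ne t v hv (vlinj h)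
  | t+1, Sum.inr (τ, c, g, p), _ => fun h => by
      have h2 : (if p = 0 then (1 : Fin 2) else 0) = p := congrArg (fun x => x.2.2.2) (vinj h)
      fin_cases p <;> simp_all

lemma father_eq_self : ∀ t (v : KochVertex m t), KochBirth m t v = 0 → KochFather m t v = v
  | 0, v, _ => rfl
  | t+1, Sum.inl v, hv => congrArg Sum.inl (father_eq_self t v hv)
  | t+1, Sum.inr _, hv => absurd hv (Nat.succ_ne_zero t)

lemma birth_sibling_eq {t : ℕ} (v : KochVertex m t) :
    KochBirth m t (KochSibling m t v) = KochBirth m t v := birth_sibling t v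

lemma adj_char : ∀ t (v u : KochVertex m t), KochBirth m t v ≠ 0 →
    ((KochGraph m t).Adj v u ↔
      u = KochFather m t v ∨ u = KochSibling m t v ∨ (KochFather m t u = v ∧ u ≠ v))
  | 0, v, u, hv => absurd rfl hv
  | t+1, Sum.inl v, Sum.inl u, hv => by
      rw [adj_inl_inl, adj_char t v u hv]
      simp only [KochFather, KochSibling]
      constructor
      · rintro (h | h | ⟨h1, h2⟩)
        · exact Or.inl (congrArg Sum.inl h)
        · exact Or.inr (Or.inl (congrArg Sum.inl h))
        · exact Or.inr (Or.inr ⟨congrArg Sum.inl h1, fun h => h2 (vlinj h)⟩)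
      · rintro (h | h | ⟨h1, h2⟩)
        · exact Or.inl (vlinj h)
        · exact Or.inr (Or.inl (vlinj h))
        · exact Or.inr (Or.inr ⟨vlinj h1, fun h => h2 (congrArg Sum.inl h)⟩)
  | t+1, Sum.inl v, Sum.inr (τ, c, g, p), hv => by
      rw [(KochGraph m (t+1)).adj_comm (Sum.inl v) (Sum.inr (τ, c, g, p))]
      rw [show ((KochGraph m (t+1)).Adj (Sum.inr (τ, c, g, p)) (Sum.inl v)) =
        ((KochGraph m (t+1)).Adj (Sum.inl v) (Sum.inr (τ, c, g, p))) from
          propext ⟨fun h => h.symm, fun h => h.symm⟩, adj_inl_inr]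
      simp only [KochFather, KochSibling]
      constructor
      · intro h
        exact Or.inr (Or.inr ⟨congrArg Sum.inl h, fun hh => vninj hh.symm⟩)
      · rintro (h | h | ⟨h1, h2⟩)
        · exact absurd h.symm vninj
        · exact absurd h.symm vninj
        · exact vlinj h1
  | t+1, Sum.inr (τ, c, g, p), Sum.inl u, hv => by
      rw [(KochGraph m (t+1)).adj_comm (Sum.inr (τ, c, g, p)) (Sum.inl u),
        show ((KochGraph m (t+1)).Adj (Sum.inl u) (Sum.inr (τ, c, g, p))) ↔ _ from adj_inl_inr]
      simp only [KochFather, KochSibling]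
      constructor
      · intro h
        exact Or.inl (congrArg Sum.inl h.symm)
      · rintro (h | h | ⟨h1, h2⟩)
        · exact (vlinj h).symm
        · exact absurd h vninj
        · exact (vninj h1).elim
  | t+1, Sum.inr (τ, c, g, p), Sum.inr (τ', c', g', p'), hv => by
      rw [adj_inr_inr]
      simp only [KochFather, KochSibling]
      constructor
      · rintro ⟨rfl, rfl, rfl, hp⟩
        refine Or.inr (Or.inl ?_)
        have : (if p = 0 then (1:Fin 2) else 0) = p' := by fin_cases p <;> fin_cases p' <;> simp_all
        rw [this]
      · rintro (h | h | ⟨h1, h2⟩)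
        · exact (vninj h.symm).elim
        · have := vinj h
          simp only [Prod.ext_iff] at this
          obtain ⟨rfl, rfl, rfl, hp⟩ := this
          refine ⟨rfl, rfl, rfl, ?_⟩
          rw [hp]
          fin_cases p <;> simp
        · exact absurd h1 vninj

/-- The set of (triangle, corner-index) pairs pointing at `v`. -/
def Npairs (m t : ℕ) (v : KochVertex m t) : Finset (KochTri m t × Fin 3) :=
  Finset.univ.filter (fun p => KochCorner m t p.1 p.2 = v)

lemma mem_Npairs {t : ℕ} {v : KochVertex m t} {p : KochTri m t × Fin 3} :
    p ∈ Npairs m t v ↔ KochCorner m t p.1 p.2 = v := by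
  simp [Npairs]

lemma degree_eq_two_mul {t : ℕ} (v : KochVertex m t) :
    (KochGraph m t).degree v = 2 * (Npairs m t v).card := by
  classical
  rw [← SimpleGraph.card_neighborFinset_eq_degree]
  have himg : (KochGraph m t).neighborFinset v =
      (Finset.univ.filter (fun q : KochTri m t × Fin 3 × Fin 3 =>
        KochCorner m t q.1 q.2.1 = v ∧ q.2.2 ≠ q.2.1)).image
        (fun q => KochCorner m t q.1 q.2.2) := by
    ext u
    simp only [SimpleGraph.mem_neighborFinset, Finset.mem_image, Finset.mem_filter,
      Finset.mem_univ, true_and]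
    constructor
    · rintro ⟨hne, τ, i, j, hi, hj⟩
      exact ⟨(τ, i, j), ⟨hi, fun h => hne (by rw [← hi, ← hj]; rw [show j = i from h])⟩, hj⟩
    · rintro ⟨⟨τ, i, j⟩, ⟨hi, hij⟩, rfl⟩
      exact ⟨fun h => hij (corner_inj t τ ((hi.trans h).symm)), τ, i, j, hi, rfl⟩
  rw [himg, Finset.card_image_of_injOn, mul_comm]
  · rw [show (Npairs m t v).card * 2 =
      ((Npairs m t v) ×ˢ (Finset.univ : Finset (Fin 2))).card by simp]
    refine Finset.card_bij'
      (fun q _ => ((q.1, q.2.1), if q.2.2 = q.2.1 + 1 then 0 else 1))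
      (fun q _ => (q.1.1, q.1.2, if q.2 = 0 then q.1.2 + 1 else q.1.2 + 2)) ?_ ?_ ?_ ?_
    · rintro ⟨τ, i, j⟩ hq
      rw [Finset.mem_filter] at hq
      exact Finset.mem_product.2 ⟨mem_Npairs.2 hq.2.1, Finset.mem_univ _⟩
    · rintro ⟨⟨τ, i⟩, k⟩ hq
      rw [Finset.mem_product] at hq
      have hc := mem_Npairs.1 hq.1
      refine Finset.mem_filter.2 ⟨Finset.mem_univ _, hc, ?_⟩
      fin_cases i <;> fin_cases k <;> simp
    · rintro ⟨τ, i, j⟩ hq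
      rw [Finset.mem_filter] at hq
      have hij := hq.2.2
      clear hq
      fin_cases i <;> fin_cases j <;> simp_all
    · rintro ⟨⟨τ, i⟩, k⟩ hq
      fin_cases i <;> fin_cases k <;> simp
  · -- injectivity
    rintro ⟨τ, i, j⟩ hq ⟨τ', i', j'⟩ hq' h
    simp only [Finset.coe_filter, Set.mem_setOf_eq, Finset.mem_univ, true_and] at hq hq'
    obtain ⟨hi, hij⟩ := hq
    obtain ⟨hi', hij'⟩ := hq'
    simp only at h
    have hττ' : τ = τ' := shared t τ τ' i j i' j' (Ne.symm hij) (hi.trans hi'.symm) h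
    subst hττ'
    have h1 : j = j' := corner_inj t τ h
    have h2 : i = i' := corner_inj t τ (hi.trans hi'.symm)
    simp [h1, h2]

lemma Npairs_zero (v : KochVertex m 0) : (Npairs m 0 v).card = 1 := by
  classical
  rw [Finset.card_eq_one]
  refine ⟨(⟨⟩, v), ?_⟩
  ext ⟨u, i⟩
  simp only [mem_Npairs, Finset.mem_singleton, Prod.mk.injEq]
  constructor
  · intro h; exact Prod.ext rfl h
  · rintro ⟨-, rfl⟩; rfl

lemma Npairs_succ_inl {t : ℕ} (hm : 1 ≤ m) (v : KochVertex m t) :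
    (Npairs m (t+1) (Sum.inl v)).card = (m+1) * (Npairs m t v).card := by
  classical
  set S := Npairs m (t+1) (Sum.inl v) with hS
  have hsplit : (S.filter (fun p => p.1.isLeft)).card
      + (S.filter (fun p => ¬ p.1.isLeft)).card = S.card :=
    Finset.card_filter_add_card_filter_not _
  have h1 : (S.filter (fun p => p.1.isLeft)).card = (Npairs m t v).card := by
    refine Finset.card_bij'
      (fun q _ => (q.1.elim id (fun w => w.1), q.2))
      (fun q _ => (Sum.inl q.1, q.2)) ?_ ?_ ?_ ?_
    · rintro ⟨τ | w, i⟩ hq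
      · rw [Finset.mem_filter, hS] at hq
        exact mem_Npairs.2 (vlinj (mem_Npairs.1 hq.1))
      · rw [Finset.mem_filter] at hq
        exact absurd hq.2 (by simp)
    · rintro ⟨τ, i⟩ hq
      rw [mem_Npairs] at hq
      refine Finset.mem_filter.2 ⟨?_, by simp⟩
      rw [hS]
      exact mem_Npairs.2 (congrArg Sum.inl hq)
    · rintro ⟨τ | w, i⟩ hq
      · rfl
      · rw [Finset.mem_filter] at hq
        exact absurd hq.2 (by simp)
    · rintro ⟨τ, i⟩ hq
      rfl
  have h2 : (S.filter (fun p => ¬ p.1.isLeft)).card = m * (Npairs m t v).card := by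
    rw [show m * (Npairs m t v).card =
      ((Npairs m t v) ×ˢ (Finset.univ : Finset (Fin m))).card by
        simp [Finset.card_product, mul_comm]]
    refine Finset.card_bij'
      (fun q _ => (q.1.elim (fun τ => ((τ, 0), ⟨0, hm⟩)) (fun w => ((w.1, w.2.1), w.2.2))))
      (fun q _ => (Sum.inr (q.1.1, q.1.2, q.2), 0)) ?_ ?_ ?_ ?_
    · rintro ⟨τ | ⟨τ, c, g⟩, i⟩ hq
      · rw [Finset.mem_filter] at hq
        exact absurd hq.2 (by simp)
      · rw [Finset.mem_filter, hS] at hq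
        obtain ⟨-, hc⟩ := corner_eq_inl (mem_Npairs.1 hq.1)
        exact Finset.mem_product.2 ⟨mem_Npairs.2 hc, Finset.mem_univ _⟩
    · rintro ⟨⟨τ, c⟩, g⟩ hq
      rw [Finset.mem_product, mem_Npairs] at hq
      refine Finset.mem_filter.2 ⟨?_, by simp⟩
      rw [hS]
      refine mem_Npairs.2 ?_
      show KochCorner m (t+1) (Sum.inr (τ, c, g)) 0 = Sum.inl v
      rw [corner_inr, if_pos rfl, hq.1]
    · rintro ⟨τ | ⟨τ, c, g⟩, i⟩ hq
      · rw [Finset.mem_filter] at hq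
        exact absurd hq.2 (by simp)
      · rw [Finset.mem_filter, hS] at hq
        obtain ⟨hi, -⟩ := corner_eq_inl (mem_Npairs.1 hq.1)
        have hi' : i = 0 := hi
        subst hi'
        rfl
    · rintro ⟨⟨τ, c⟩, g⟩ hq
      rfl
  rw [← hsplit, h1, h2]; ring

lemma Npairs_succ_inr {t : ℕ} (τ : KochTri m t) (c : Fin 3) (g : Fin m) (p : Fin 2) :
    (Npairs m (t+1) (Sum.inr (τ, c, g, p))).card = 1 := by
  classical
  rw [Finset.card_eq_one]
  refine ⟨(Sum.inr (τ, c, g), if p = 0 then 1 else 2), ?_⟩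
  ext ⟨σ, i⟩
  simp only [mem_Npairs, Finset.mem_singleton, Prod.mk.injEq]
  constructor
  · intro h; replace h := mem_Npairs.1 h
    rcases σ with σ | ⟨σ, c', g'⟩
    · exact absurd h vninj
    · obtain ⟨hi, hb⟩ := corner_eq_inr h
      simp only [Prod.ext_iff] at hb
      obtain ⟨rfl, rfl, rfl, hp⟩ := hb
      refine Prod.ext rfl ?_
      fin_cases i <;> simp_all <;> fin_cases p <;> simp_all
  · rintro ⟨rfl, rfl⟩
    refine mem_Npairs.2 ?_
    rw [corner_inr]
    fin_cases p <;> simp <;> rfl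

lemma Npairs_card (hm : 1 ≤ m) : ∀ t (v : KochVertex m t),
    (Npairs m t v).card = (m+1) ^ (t - KochBirth m t v)
  | 0, v => by rw [Npairs_zero]; rfl
  | t+1, Sum.inl v => by
      rw [Npairs_succ_inl hm, Npairs_card hm t v]
      have hb := birth_le (m := m) t v
      show (m+1) * (m+1) ^ (t - KochBirth m t v) = (m+1) ^ (t + 1 - KochBirth m t v)
      rw [← pow_succ']
      congr 1
      omega
  | t+1, Sum.inr (τ, c, g, p) => by
      rw [Npairs_succ_inr]
      show 1 = (m+1) ^ (t + 1 - (t+1))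
      simp

lemma degree_formula (hm : 1 ≤ m) {t : ℕ} (v : KochVertex m t) :
    (KochGraph m t).degree v = 2 * (m+1) ^ (t - KochBirth m t v) := by
  rw [degree_eq_two_mul, Npairs_card hm]

lemma degree_lt_of_birth_lt (hm : 1 ≤ m) {t : ℕ} {a b : KochVertex m t}
    (h : KochBirth m t a < KochBirth m t b) :
    (KochGraph m t).degree b < (KochGraph m t).degree a := by
  rw [degree_formula hm, degree_formula hm]
  have hbt := birth_le (m := m) t b
  have hpow : (m+1) ^ (t - KochBirth m t b) < (m+1) ^ (t - KochBirth m t a) :=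
    Nat.pow_lt_pow_right (by omega) (by omega)
  omega

lemma degree_eq_of_birth_eq (hm : 1 ≤ m) {t : ℕ} {a b : KochVertex m t}
    (h : KochBirth m t a = KochBirth m t b) :
    (KochGraph m t).degree a = (KochGraph m t).degree b := by
  rw [degree_formula hm, degree_formula hm, h]

lemma birth_lt_of_child {t : ℕ} {v u : KochVertex m t}
    (hf : KochFather m t u = v) (hne : u ≠ v) : KochBirth m t v < KochBirth m t u := by
  rcases eq_or_ne (KochBirth m t u) 0 with h0 | h0
  · exact absurd ((father_eq_self t u h0).symm.trans hf) hne
  · exact hf ▸ birth_father_lt t u h0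

end Koch

open Koch in
/-- For all integers m ≥ 1 and t ≥ 1, every non-initial vertex v of `K_{m,t}`
has exactly one neighbor of degree strictly greater than the degree of v, its father vertex
(which was added at an earlier step), and every other neighbor apart from this father and the
unique equal-degree neighbor (the sibling) has degree strictly smaller than the degree of v. -/
theorem koch_father_neighbor (m t : ℕ) (hm : 1 ≤ m) (ht : 1 ≤ t)
    (v : KochVertex m t) (hv : KochBirth m t v ≠ 0) :
    (KochGraph m t).Adj v (KochFather m t v)
    ∧ (KochGraph m t).degree v < (KochGraph m t).degree (KochFather m t v)
    ∧ KochBirth m t (KochFather m t v) < KochBirth m t v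
    ∧ (∀ u : KochVertex m t, (KochGraph m t).Adj v u →
        (KochGraph m t).degree v < (KochGraph m t).degree u → u = KochFather m t v)
    ∧ (∀ u : KochVertex m t, (KochGraph m t).Adj v u →
        u ≠ KochFather m t v → u ≠ KochSibling m t v →
        (KochGraph m t).degree u < (KochGraph m t).degree v) := by
  have hbf := birth_father_lt t v hv
  refine ⟨?_, ?_, hbf, ?_, ?_⟩
  · exact (adj_char t v (KochFather m t v) hv).2 (Or.inl rfl)
  · exact degree_lt_of_birth_lt hm hbf
  · intro u hadj hdeg
    rcases (adj_char t v u hv).1 hadj with h | h | ⟨hf, hne⟩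
    · exact h
    · exfalso
      have := degree_eq_of_birth_eq hm (a := u) (b := v)
        (by rw [h, birth_sibling])
      omega
    · exfalso
      have := degree_lt_of_birth_lt hm (birth_lt_of_child hf hne)
      omega
  · intro u hadj hfne hsne
    rcases (adj_char t v u hv).1 hadj with h | h | ⟨hf, hne⟩
    · exact absurd h hfne
    · exact absurd h hsne
    · exact degree_lt_of_birth_lt hm (birth_lt_of_child hf hne)
end

section
/- For all integers m ≥ 1 and 1 ≤ i ≤ t, if v is a vertex of the Koch network K_{m,t} added at step i, then the set of vertices u ≠ v such that every path from u to an initial vertex passes through v (the offspring of v) has cardinality exactly [2(3m+1)^{t-i} − 2]/3. -/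
/-! ### Auxiliary development -/

/-- `KochDescB m t u v`: `u` is an offspring (descendant) of `v`. -/
def KochDescB (m : ℕ) : ∀ t, KochVertex m t → KochVertex m t → Bool
  | 0, _, _ => false
  | t+1, Sum.inl u, Sum.inl v => KochDescB m t u v
  | t+1, Sum.inr (τ, c, _, _), Sum.inl v =>
      decide (KochCorner m t τ c = v) || KochDescB m t (KochCorner m t τ c) v
  | _+1, Sum.inl _, Sum.inr _ => false
  | _+1, Sum.inr _, Sum.inr _ => false

lemma kochBirth_le (m : ℕ) : ∀ t (v : KochVertex m t), KochBirth m t v ≤ t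
  | 0, _ => le_refl 0
  | t+1, Sum.inl v => (kochBirth_le m t v).trans (Nat.le_succ t)
  | _+1, Sum.inr _ => le_refl _

lemma kochDescB_inr_right (m t : ℕ) (u : KochVertex m (t+1)) (x) :
    KochDescB m (t+1) u (Sum.inr x) = false := by
  cases u with
  | inl a => rfl
  | inr b => obtain ⟨τ, c, g, p⟩ := b; rfl

lemma kochDescB_irrefl (m : ℕ) : ∀ t (v : KochVertex m t), KochDescB m t v v = false
  | 0, _ => rfl
  | t+1, Sum.inl v => kochDescB_irrefl m t v
  | t+1, Sum.inr x => kochDescB_inr_right m t _ x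

lemma kochDescB_birth_pos (m : ℕ) : ∀ t (u v : KochVertex m t),
    KochDescB m t u v = true → 1 ≤ KochBirth m t u
  | 0, _, _, h => by simp [KochDescB] at h
  | t+1, Sum.inl u, Sum.inl v, h => kochDescB_birth_pos m t u v h
  | t+1, Sum.inl u, Sum.inr x, h => by exact absurd ((kochDescB_inr_right m t (Sum.inl u) x).symm.trans h) (by simp)
  | t+1, Sum.inr x, _, _ => Nat.succ_le_succ (Nat.zero_le t)

lemma kochDescB_father (m : ℕ) : ∀ t (u v : KochVertex m t), 1 ≤ KochBirth m t u →
    (KochFather m t u = v ∨ KochDescB m t (KochFather m t u) v = true) →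
    KochDescB m t u v = true
  | 0, u, v, h, _ => by simp [KochBirth] at h
  | t+1, Sum.inl u, Sum.inl v, h, h2 => by
      have : KochFather m t u = v ∨ KochDescB m t (KochFather m t u) v = true := by
        rcases h2 with h2 | h2
        · exact Or.inl (Sum.inl.inj h2)
        · exact Or.inr h2
      exact kochDescB_father m t u v h this
  | t+1, Sum.inl u, Sum.inr x, h, h2 => by
      rcases h2 with h2 | h2
      · exact absurd h2 (by simp [KochFather])
      · rw [kochDescB_inr_right] at h2; exact absurd h2 (by simp)
  | t+1, Sum.inr ⟨τ, c, g, p⟩, Sum.inl v, _, h2 => by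
      show (decide (KochCorner m t τ c = v) || KochDescB m t (KochCorner m t τ c) v) = true
      rcases h2 with h2 | h2
      · rw [show KochFather m (t+1) (Sum.inr (τ, c, g, p)) = Sum.inl (KochCorner m t τ c) from rfl] at h2
        injection h2 with h2
        simp [h2]
      · have : KochDescB m t (KochCorner m t τ c) v = true := h2
        simp [this]
  | t+1, Sum.inr ⟨τ, c, g, p⟩, Sum.inr x, _, h2 => by
      rcases h2 with h2 | h2
      · exact absurd h2 (by simp [KochFather])
      · rw [kochDescB_inr_right] at h2; exact absurd h2 (by simp)

lemma kochDescB_closure (m : ℕ) : ∀ t (τ : KochTri m t) (j j' : Fin 3) (v : KochVertex m t),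
    KochDescB m t (KochCorner m t τ j) v = true →
    KochCorner m t τ j' = v ∨ KochDescB m t (KochCorner m t τ j') v = true
  | 0, τ, j, j', v, h => by simp [KochDescB] at h
  | t+1, Sum.inl τ, j, j', Sum.inl v, h => by
      have h' : KochDescB m t (KochCorner m t τ j) v = true := h
      rcases kochDescB_closure m t τ j j' v h' with h2 | h2
      · exact Or.inl (congrArg Sum.inl h2)
      · exact Or.inr h2
  | t+1, Sum.inl τ, j, j', Sum.inr x, h => by
      rw [kochDescB_inr_right] at h; exact absurd h (by simp)
  | t+1, Sum.inr ⟨τ, c, g⟩, j, j', Sum.inr x, h => by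
      rw [kochDescB_inr_right] at h; exact absurd h (by simp)
  | t+1, Sum.inr ⟨τ, c, g⟩, j, j', Sum.inl v, h => by
      have key : KochCorner m t τ c = v ∨ KochDescB m t (KochCorner m t τ c) v = true := by
        fin_cases j
        · have h' : KochDescB m t (KochCorner m t τ c) v = true := h
          exact Or.inr h'
        · have h' : (decide (KochCorner m t τ c = v) ||
              KochDescB m t (KochCorner m t τ c) v) = true := h
          simpa using h'
        · have h' : (decide (KochCorner m t τ c = v) ||
              KochDescB m t (KochCorner m t τ c) v) = true := h
          simpa using h'
      fin_cases j'
      · show Sum.inl (KochCorner m t τ c) = Sum.inl v ∨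
          KochDescB m (t+1) (Sum.inl (KochCorner m t τ c)) (Sum.inl v) = true
        rcases key with h2 | h2
        · exact Or.inl (congrArg Sum.inl h2)
        · exact Or.inr h2
      · refine Or.inr ?_
        show (decide (KochCorner m t τ c = v) || KochDescB m t (KochCorner m t τ c) v) = true
        simpa using key
      · refine Or.inr ?_
        show (decide (KochCorner m t τ c = v) || KochDescB m t (KochCorner m t τ c) v) = true
        simpa using key

lemma kochAdj_lift (m t : ℕ) {a b : KochVertex m t} (h : (KochGraph m t).Adj a b) :
    (KochGraph m (t+1)).Adj (Sum.inl a) (Sum.inl b) := by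
  obtain ⟨hne, τ, i, j, hi, hj⟩ := h
  exact ⟨fun h => hne (Sum.inl.inj h), Sum.inl τ, i, j, congrArg Sum.inl hi, congrArg Sum.inl hj⟩

lemma kochAdj_father (m : ℕ) : ∀ t (u : KochVertex m t), 1 ≤ KochBirth m t u →
    (KochGraph m t).Adj u (KochFather m t u)
  | 0, u, h => by simp [KochBirth] at h
  | t+1, Sum.inl u, h => kochAdj_lift m t (kochAdj_father m t u h)
  | t+1, Sum.inr ⟨τ, c, g, p⟩, _ => by
      refine ⟨by simp [KochFather]; exact Sum.inr_ne_inl, Sum.inr (τ, c, g), if p = 0 then 1 else 2, 0, ?_, rfl⟩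
      fin_cases p <;> rfl

lemma kochBirth_father_lt (m : ℕ) : ∀ t (u : KochVertex m t), 1 ≤ KochBirth m t u →
    KochBirth m t (KochFather m t u) < KochBirth m t u
  | 0, u, h => by simp [KochBirth] at h
  | t+1, Sum.inl u, h => kochBirth_father_lt m t u h
  | t+1, Sum.inr ⟨τ, c, g, p⟩, _ => by
      show KochBirth m t (KochCorner m t τ c) < t + 1
      exact Nat.lt_succ_of_le (kochBirth_le m t _)

/-- If `S` is closed under adjacency except for exits to `v`, any walk from inside `S`
to outside `S` must pass through `v`. -/
lemma walk_mem_of_closed {V : Type*} {G : SimpleGraph V} (S : Set V) (v : V)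
    (hcl : ∀ a ∈ S, ∀ b, G.Adj a b → b ∈ S ∨ b = v) :
    ∀ {u w : V}, u ∈ S → w ∉ S → ∀ p : G.Walk u w, v ∈ p.support := by
  intro u w hu hw p
  induction p with
  | nil => exact absurd hu hw
  | @cons a b c hab p ih =>
      rcases hcl a hu b hab with hb | hb
      · exact List.mem_cons_of_mem _ (ih hb hw)
      · subst hb; exact List.mem_cons_of_mem _ p.start_mem_support

/-- From a non-descendant `u ≠ v` there is a walk to an initial vertex avoiding `v`. -/
lemma koch_escape (m t : ℕ) (v : KochVertex m t) :
    ∀ n (u : KochVertex m t), KochBirth m t u ≤ n →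
      KochDescB m t u v = false → u ≠ v →
      ∃ w, KochBirth m t w = 0 ∧ ∃ p : (KochGraph m t).Walk u w, v ∉ p.support := by
  intro n
  induction n with
  | zero =>
      intro u hb _ hne
      exact ⟨u, Nat.le_zero.mp hb, SimpleGraph.Walk.nil, by
        simp [SimpleGraph.Walk.support_nil]; exact fun h => hne h.symm⟩
  | succ n ih =>
      intro u hb hd hne
      by_cases h0 : KochBirth m t u = 0
      · exact ⟨u, h0, SimpleGraph.Walk.nil, by simp [SimpleGraph.Walk.support_nil]; exact fun h => hne h.symm⟩
      · have h1 : 1 ≤ KochBirth m t u := Nat.one_le_iff_ne_zero.mpr h0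
        set f := KochFather m t u with hf
        have hfd : KochDescB m t f v = false := by
          by_contra hc
          have := kochDescB_father m t u v h1 (Or.inr (by simpa using hc))
          rw [hd] at this; exact absurd this (by simp)
        have hfv : f ≠ v := by
          intro hc
          have := kochDescB_father m t u v h1 (Or.inl hc)
          rw [hd] at this; exact absurd this (by simp)
        have hfb : KochBirth m t f ≤ n :=
          Nat.lt_succ_iff.mp (lt_of_lt_of_le (kochBirth_father_lt m t u h1) hb)
        obtain ⟨w, hw0, p, hp⟩ := ih f hfb hfd hfv
        exact ⟨w, hw0, SimpleGraph.Walk.cons (kochAdj_father m t u h1) p, by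
          simp [SimpleGraph.Walk.support_cons]
          exact ⟨fun h => hne h.symm, hp⟩⟩

/-- The offspring set characterization. -/
lemma koch_offspring_set_eq (m t : ℕ) (v : KochVertex m t) (hv1 : 1 ≤ KochBirth m t v) :
    {u : KochVertex m t | u ≠ v ∧ ∀ w : KochVertex m t, KochBirth m t w = 0 →
        ∀ p : (KochGraph m t).Walk u w, p.IsPath → v ∈ p.support}
      = {u : KochVertex m t | KochDescB m t u v = true} := by
  ext u
  simp only [Set.mem_setOf_eq]
  constructor
  · rintro ⟨hne, hall⟩
    by_contra hd
    have hd' : KochDescB m t u v = false := by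
      cases h : KochDescB m t u v
      · rfl
      · exact absurd h hd
    obtain ⟨w, hw0, p, hp⟩ := koch_escape m t v (KochBirth m t u) u le_rfl hd' hne
    have := hall w hw0 p.bypass p.bypass_isPath
    exact hp (p.support_bypass_subset this)
  · intro hd
    have hne : u ≠ v := by
      intro h; rw [h, kochDescB_irrefl] at hd; exact absurd hd (by simp)
    refine ⟨hne, fun w hw0 p _ => ?_⟩
    refine walk_mem_of_closed {x | KochDescB m t x v = true} v ?_ hd ?_ p
    · rintro a ha b ⟨hne', τ, i, j, hi, hj⟩
      subst hi; subst hj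
      rcases kochDescB_closure m t τ i j v ha with h2 | h2
      · exact Or.inr h2
      · exact Or.inl h2
    · intro hc
      have := kochDescB_birth_pos m t w v hc
      omega

/-- Number of offspring of `v` in `K_{m,t}`. -/
noncomputable def NKoch (m t : ℕ) (v : KochVertex m t) : ℕ :=
  Nat.card {u : KochVertex m t // KochDescB m t u v = true}

/-- Number of (triangle, corner) slots whose corner is `v` or an offspring of `v`. -/
noncomputable def PKoch (m t : ℕ) (v : KochVertex m t) : ℕ :=
  Nat.card {q : KochTri m t × Fin 3 //
    KochCorner m t q.1 q.2 = v ∨ KochDescB m t (KochCorner m t q.1 q.2) v = true}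

def prodAux {T F M P : Type*} (Q : T → F → Prop) :
    {b : T × F × M × P // Q b.1 b.2.1} ≃ {q : T × F // Q q.1 q.2} × (M × P) where
  toFun x := (⟨(x.1.1, x.1.2.1), x.2⟩, (x.1.2.2.1, x.1.2.2.2))
  invFun y := ⟨(y.1.1.1, y.1.1.2, y.2.1, y.2.2), y.1.2⟩
  left_inv := by rintro ⟨⟨a, b, c, d⟩, h⟩; rfl
  right_inv := by rintro ⟨⟨⟨a, b⟩, h⟩, c, d⟩; rfl

def prodAux2 {T F M P : Type*} (Q : T → F → Prop) :
    {b : (T × F × M) × P // Q b.1.1 b.1.2.1} ≃ {q : T × F // Q q.1 q.2} × (M × P) where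
  toFun x := (⟨(x.1.1.1, x.1.1.2.1), x.2⟩, (x.1.1.2.2, x.1.2))
  invFun y := ⟨((y.1.1.1, y.1.1.2, y.2.1), y.2.2), y.1.2⟩
  left_inv := by rintro ⟨⟨⟨a, b, c⟩, d⟩, h⟩; rfl
  right_inv := by rintro ⟨⟨⟨a, b⟩, h⟩, c, d⟩; rfl

lemma NKoch_succ (m t : ℕ) (v : KochVertex m t) :
    NKoch m (t+1) (Sum.inl v) = NKoch m t v + PKoch m t v * (m * 2) := by
  have e : {u : KochVertex m (t+1) // KochDescB m (t+1) u (Sum.inl v) = true}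
      ≃ {a : KochVertex m t // KochDescB m t a v = true}
        ⊕ ({q : KochTri m t × Fin 3 // KochCorner m t q.1 q.2 = v ∨
              KochDescB m t (KochCorner m t q.1 q.2) v = true} × (Fin m × Fin 2)) := by
    refine (Equiv.subtypeSum (p := fun u : KochVertex m t ⊕ (KochTri m t × Fin 3 × Fin m × Fin 2)
      => KochDescB m (t+1) u (Sum.inl v) = true)).trans (Equiv.sumCongr (Equiv.refl _) ?_)
    refine (Equiv.subtypeEquivRight (q := fun b : KochTri m t × Fin 3 × Fin m × Fin 2 =>
        KochCorner m t b.1 b.2.1 = v ∨ KochDescB m t (KochCorner m t b.1 b.2.1) v = true)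
        (fun b => ?_)).trans
      (prodAux (fun τ c => KochCorner m t τ c = v ∨ KochDescB m t (KochCorner m t τ c) v = true))
    obtain ⟨τ, c, g, p⟩ := b
    show ((decide (KochCorner m t τ c = v) ||
      KochDescB m t (KochCorner m t τ c) v) = true) ↔ _
    simp
  show Nat.card {u : KochVertex m (t+1) // KochDescB m (t+1) u (Sum.inl v) = true} =
    NKoch m t v + PKoch m t v * (m * 2)
  rw [Nat.card_congr e, Nat.card_sum, Nat.card_prod]
  simp [Nat.card_eq_fintype_card, NKoch, PKoch]

def sumProdSubtype {A B C : Type*} (Q : (A ⊕ B) × C → Prop) :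
    {x : (A ⊕ B) × C // Q x}
      ≃ {a : A × C // Q (Sum.inl a.1, a.2)} ⊕ {b : B × C // Q (Sum.inr b.1, b.2)} where
  toFun x := match x with
    | ⟨(Sum.inl a, c), h⟩ => Sum.inl ⟨(a, c), h⟩
    | ⟨(Sum.inr b, c), h⟩ => Sum.inr ⟨(b, c), h⟩
  invFun y := match y with
    | Sum.inl ⟨(a, c), h⟩ => ⟨(Sum.inl a, c), h⟩
    | Sum.inr ⟨(b, c), h⟩ => ⟨(Sum.inr b, c), h⟩
  left_inv := by rintro ⟨⟨a | b, c⟩, h⟩ <;> rfl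
  right_inv := by rintro (⟨⟨a, c⟩, h⟩ | ⟨⟨b, c⟩, h⟩) <;> rfl

lemma PKoch_succ (m t : ℕ) (v : KochVertex m t) :
    PKoch m (t+1) (Sum.inl v) = PKoch m t v * (3 * m + 1) := by
  have e : {q : KochTri m (t+1) × Fin 3 //
        KochCorner m (t+1) q.1 q.2 = Sum.inl v ∨
          KochDescB m (t+1) (KochCorner m (t+1) q.1 q.2) (Sum.inl v) = true}
      ≃ {q : KochTri m t × Fin 3 // KochCorner m t q.1 q.2 = v ∨
            KochDescB m t (KochCorner m t q.1 q.2) v = true}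
        ⊕ ({q : KochTri m t × Fin 3 // KochCorner m t q.1 q.2 = v ∨
              KochDescB m t (KochCorner m t q.1 q.2) v = true} × (Fin m × Fin 3)) := by
    refine (sumProdSubtype (A := KochTri m t) (B := KochTri m t × Fin 3 × Fin m) (C := Fin 3)
      (fun q => KochCorner m (t+1) q.1 q.2 = Sum.inl v ∨
        KochDescB m (t+1) (KochCorner m (t+1) q.1 q.2) (Sum.inl v) = true)).trans
      (Equiv.sumCongr ?_ ?_)
    · refine Equiv.subtypeEquivRight (fun a => ?_)
      obtain ⟨τ, j⟩ := a
      show (Sum.inl (KochCorner m t τ j) = Sum.inl v ∨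
        KochDescB m t (KochCorner m t τ j) v = true) ↔ _
      simp
    · refine (Equiv.subtypeEquivRight (q := fun b : (KochTri m t × Fin 3 × Fin m) × Fin 3 =>
          KochCorner m t b.1.1 b.1.2.1 = v ∨
            KochDescB m t (KochCorner m t b.1.1 b.1.2.1) v = true)
          (fun b => ?_)).trans
        (prodAux2 (fun τ c => KochCorner m t τ c = v ∨
          KochDescB m t (KochCorner m t τ c) v = true))
      obtain ⟨⟨τ, c, g⟩, j⟩ := b
      fin_cases j
      · show (Sum.inl (KochCorner m t τ c) = Sum.inl v ∨
          KochDescB m t (KochCorner m t τ c) v = true) ↔ _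
        simp
      · show ((Sum.inr (τ, c, g, 0) : KochVertex m (t+1)) = Sum.inl v ∨
          (decide (KochCorner m t τ c = v) ||
            KochDescB m t (KochCorner m t τ c) v) = true) ↔ _
        simp
      · show ((Sum.inr (τ, c, g, 1) : KochVertex m (t+1)) = Sum.inl v ∨
          (decide (KochCorner m t τ c = v) ||
            KochDescB m t (KochCorner m t τ c) v) = true) ↔ _
        simp
  show Nat.card {q : KochTri m (t+1) × Fin 3 //
        KochCorner m (t+1) q.1 q.2 = Sum.inl v ∨
          KochDescB m (t+1) (KochCorner m (t+1) q.1 q.2) (Sum.inl v) = true} =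
    PKoch m t v * (3 * m + 1)
  rw [Nat.card_congr e, Nat.card_sum, Nat.card_prod, Nat.card_prod]
  simp [Nat.card_eq_fintype_card, PKoch]
  ring

lemma NKoch_base (m t : ℕ) (x : KochTri m t × Fin 3 × Fin m × Fin 2) :
    NKoch m (t+1) (Sum.inr x) = 0 := by
  show Nat.card {u : KochVertex m (t+1) // KochDescB m (t+1) u (Sum.inr x) = true} = 0
  rw [Nat.card_eq_zero]
  left
  constructor
  rintro ⟨u, hu⟩
  rw [kochDescB_inr_right] at hu
  exact absurd hu (by simp)

lemma PKoch_base (m t : ℕ) (x : KochTri m t × Fin 3 × Fin m × Fin 2) :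
    PKoch m (t+1) (Sum.inr x) = 1 := by
  obtain ⟨τ₀, c₀, g₀, p₀⟩ := x
  show Nat.card {q : KochTri m (t+1) × Fin 3 //
      KochCorner m (t+1) q.1 q.2 = Sum.inr (τ₀, c₀, g₀, p₀) ∨
        KochDescB m (t+1) (KochCorner m (t+1) q.1 q.2) (Sum.inr (τ₀, c₀, g₀, p₀)) = true} = 1
  rw [Nat.card_eq_one_iff_unique]
  have hq₀ : KochCorner m (t+1) (Sum.inr (τ₀, c₀, g₀))
      (if p₀ = 0 then (1 : Fin 3) else 2) = Sum.inr (τ₀, c₀, g₀, p₀) := by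
    fin_cases p₀ <;> rfl
  constructor
  · constructor
    rintro ⟨⟨τ', j⟩, h⟩ ⟨⟨τ'', j'⟩, h'⟩
    have key : ∀ (τ : KochTri m (t+1)) (j : Fin 3),
        (KochCorner m (t+1) τ j = Sum.inr (τ₀, c₀, g₀, p₀) ∨
          KochDescB m (t+1) (KochCorner m (t+1) τ j)
            (Sum.inr (τ₀, c₀, g₀, p₀)) = true) →
        τ = Sum.inr (τ₀, c₀, g₀) ∧ j = (if p₀ = 0 then (1 : Fin 3) else 2) := by
      rintro τ j h
      rw [kochDescB_inr_right] at h
      replace h : KochCorner m (t+1) τ j = Sum.inr (τ₀, c₀, g₀, p₀) := by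
        rcases h with h | h
        · exact h
        · exact absurd h (by simp)
      match τ with
      | Sum.inl τ =>
          exact absurd h (by show Sum.inl _ ≠ _; simp)
      | Sum.inr (τ, c, g) =>
          fin_cases j
          · exact absurd h (by show Sum.inl _ ≠ _; simp)
          · replace h : (Sum.inr (τ, c, g, 0) : KochVertex m (t+1))
                = Sum.inr (τ₀, c₀, g₀, p₀) := h
            injection h with h
            simp only [Prod.mk.injEq] at h
            obtain ⟨h1, h2, h3, h4⟩ := h
            subst h1; subst h2; subst h3
            refine ⟨rfl, ?_⟩
            rw [← h4]
            rfl
          · replace h : (Sum.inr (τ, c, g, 1) : KochVertex m (t+1))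
                = Sum.inr (τ₀, c₀, g₀, p₀) := h
            injection h with h
            simp only [Prod.mk.injEq] at h
            obtain ⟨h1, h2, h3, h4⟩ := h
            subst h1; subst h2; subst h3
            refine ⟨rfl, ?_⟩
            rw [← h4]
            rfl
    have k1 := key τ' j h
    have k2 := key τ'' j' h'
    exact Subtype.ext (Prod.ext (k1.1.trans k2.1.symm) (k1.2.trans k2.2.symm))
  · exact ⟨⟨(Sum.inr (τ₀, c₀, g₀), if p₀ = 0 then (1 : Fin 3) else 2), Or.inl hq₀⟩⟩

lemma koch_counts (m : ℕ) : ∀ t (i : ℕ) (v : KochVertex m t),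
    1 ≤ i → KochBirth m t v = i → i ≤ t →
    PKoch m t v = (3 * m + 1) ^ (t - i) ∧
      3 * NKoch m t v + 2 = 2 * (3 * m + 1) ^ (t - i) := by
  intro t
  induction t with
  | zero => intro i v hi _ hit; omega
  | succ t ih =>
      intro i v hi hb hit
      cases v with
      | inr x =>
          have : i = t + 1 := by rw [← hb]; rfl
          subst this
          rw [Nat.sub_self, pow_zero, NKoch_base, PKoch_base]
          omega
      | inl v' =>
          have hb' : KochBirth m t v' = i := hb
          have hit' : i ≤ t := hb' ▸ kochBirth_le m t v'
          obtain ⟨hP, hN⟩ := ih i v' hi hb' hit'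
          have hts : t + 1 - i = (t - i) + 1 := by omega
          rw [hts, NKoch_succ, PKoch_succ, hP, pow_succ]
          constructor
          · rfl
          · nlinarith [hN]
/-- For all integers m ≥ 1 and 1 ≤ i ≤ t, if v is a vertex of `K_{m,t}` added at
step i, then the set of vertices u ≠ v such that every path from u to an initial vertex passes
through v has cardinality exactly `[2(3m+1)^(t-i) − 2]/3`. -/
theorem koch_offspring_count (m i t : ℕ) (hm : 1 ≤ m) (hi : 1 ≤ i) (hit : i ≤ t)
    (v : KochVertex m t) (hv : KochBirth m t v = i) :
    {u : KochVertex m t | u ≠ v ∧ ∀ w : KochVertex m t, KochBirth m t w = 0 →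
        ∀ p : (KochGraph m t).Walk u w, p.IsPath → v ∈ p.support}.ncard
      = (2 * (3 * m + 1) ^ (t - i) - 2) / 3 := by
  have hv1 : 1 ≤ KochBirth m t v := by omega
  rw [koch_offspring_set_eq m t v hv1]
  have hcard : {u : KochVertex m t | KochDescB m t u v = true}.ncard = NKoch m t v := by
    rw [← Nat.card_coe_set_eq]
    rfl
  rw [hcard]
  obtain ⟨-, hN⟩ := koch_counts m t i v hi hv hit
  generalize (3 * m + 1) ^ (t - i) = K at hN ⊢
  omega
end
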